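/- arXiv:0903.1025 — 9 statements merged into one kernel-verified Lean document; each statement's English description precedes it below -/
import Mathlib

section
/- Under the stated hypotheses, the function t ↦ e^{z(t)}/Δ(t) tends to 0 as t → b⁻; consequently this function extends continuously to [c,b] and the integral L := ∫_c^b e^{z(t)}/Δ(t) dt is finite. -/
open Real Filter Set Topology intervalIntegral

set_option maxHeartbeats 1000000 in
/-- Under the stated hypotheses, `t ↦ exp (z t) / Δ t` tends to `0`
as `t → b⁻`; consequently it extends continuously to `[c,b]` and the integral
`L = ∫_c^b e^{z(t)}/Δ(t) dt` is finite (i.e. the function is interval integrable). -/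
theorem stmt_1 (a b c σ : ℝ) (Δ : ℝ → ℝ)
    (hab : a < b)
    (hΔ : ContDiffOn ℝ 1 Δ (Icc a b))
    (hΔa : Δ a = 0) (hΔb : Δ b = 0)
    (hΔpos : ∀ θ ∈ Ioo a b, 0 < Δ θ)
    (hc : c ∈ Ioo a b) (hσ : 0 < σ)
    (z : ℝ → ℝ)
    (hz : ∀ x, z x = -(2 / σ ^ 2) * ∫ s in c..x, ((Δ s) ^ 2)⁻¹) :
    Tendsto (fun t => Real.exp (z t) / Δ t) (𝓝[<] b) (𝓝 0) ∧
    (∃ g : ℝ → ℝ, ContinuousOn g (Icc c b) ∧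
      ∀ t ∈ Ico c b, g t = Real.exp (z t) / Δ t) ∧
    IntervalIntegrable (fun t => Real.exp (z t) / Δ t) MeasureTheory.volume c b := by
  obtain ⟨hac, hcb⟩ := hc
  have hσ2 : (0:ℝ) < σ ^ 2 := by positivity
  -- bound on the derivative
  have hderivc : ContinuousOn (derivWithin Δ (Icc a b)) (Icc a b) :=
    hΔ.continuousOn_derivWithin (uniqueDiffOn_Icc hab) le_rfl
  obtain ⟨K, hK⟩ : ∃ K, ∀ x ∈ Icc a b, ‖derivWithin Δ (Icc a b) x‖ ≤ K :=
    (isCompact_Icc.exists_bound_of_continuousOn hderivc)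
  set M : ℝ := max K 1 with hMdef
  have hM1 : (1:ℝ) ≤ M := le_max_right _ _
  have hM0 : (0:ℝ) < M := lt_of_lt_of_le one_pos hM1
  have hKM : ∀ x ∈ Icc a b, ‖derivWithin Δ (Icc a b) x‖ ≤ M :=
    fun x hx => (hK x hx).trans (le_max_left _ _)
  have hΔdiff : DifferentiableOn ℝ Δ (Icc a b) := hΔ.differentiableOn one_ne_zero
  -- Δ t ≤ M * (b - t)
  have hΔle : ∀ t ∈ Icc a b, Δ t ≤ M * (b - t) := by
    intro t ht
    have h := (convex_Icc a b).norm_image_sub_le_of_norm_derivWithin_le hΔdiff hKM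
      (right_mem_Icc.2 hab.le) ht
    rw [hΔb, sub_zero] at h
    calc Δ t ≤ |Δ t| := le_abs_self _
    _ = ‖Δ t‖ := rfl
    _ ≤ M * ‖t - b‖ := h
    _ = M * |t - b| := rfl
    _ = M * (b - t) := by rw [abs_sub_comm, abs_of_nonneg (by linarith [ht.2])]
  -- pointwise facts on Ioo a b
  have hmem : ∀ x ∈ Ioo a b, Icc a b ∈ 𝓝 x := fun x hx => Icc_mem_nhds hx.1 hx.2
  have hΔat : ∀ x ∈ Ioo a b, DifferentiableAt ℝ Δ x := fun x hx =>
    (hΔdiff x (Ioo_subset_Icc_self hx)).differentiableAt (hmem x hx)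
  have hdb : ∀ x ∈ Ioo a b, |deriv Δ x| ≤ M := by
    intro x hx
    have : derivWithin Δ (Icc a b) x = deriv Δ x :=
      derivWithin_of_mem_nhds (hmem x hx)
    have h := hKM x (Ioo_subset_Icc_self hx)
    rw [this] at h
    exact h
  -- continuity of the integrand of z on Ioo a b
  have hg0 : ContinuousOn (fun s => ((Δ s) ^ 2)⁻¹) (Ioo a b) := by
    apply ContinuousOn.inv₀
    · exact ((hΔ.continuousOn.mono Ioo_subset_Icc_self).pow 2)
    · intro s hs; exact pow_ne_zero 2 (ne_of_gt (hΔpos s hs))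
  -- z has derivative
  have hzd : ∀ x ∈ Ioo a b, HasDerivAt z (-(2 / σ ^ 2) * ((Δ x) ^ 2)⁻¹) x := by
    intro x hx
    have hsub : uIcc c x ⊆ Ioo a b := by
      exact Set.ordConnected_Ioo.uIcc_subset ⟨hac, hcb⟩ hx
    have hint : IntervalIntegrable (fun s => ((Δ s) ^ 2)⁻¹) MeasureTheory.volume c x :=
      (hg0.mono hsub).intervalIntegrable
    have hmeas : StronglyMeasurableAtFilter (fun s => ((Δ s) ^ 2)⁻¹) (𝓝 x) MeasureTheory.volume :=
      hg0.stronglyMeasurableAtFilter isOpen_Ioo x hx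
    have hca : ContinuousAt (fun s => ((Δ s) ^ 2)⁻¹) x :=
      (hg0 x hx).continuousAt (isOpen_Ioo.mem_nhds hx)
    have hF := intervalIntegral.integral_hasDerivAt_right hint hmeas hca
    have : HasDerivAt (fun u => -(2 / σ ^ 2) * ∫ s in c..u, ((Δ s) ^ 2)⁻¹)
        (-(2 / σ ^ 2) * ((Δ x) ^ 2)⁻¹) x := hF.const_mul _
    exact this.congr_of_eventuallyEq (Filter.Eventually.of_forall fun t => (hz t))
  -- φ = z - log Δ and its derivative
  set φ : ℝ → ℝ := fun t => z t - Real.log (Δ t) with hφdef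
  have hφd : ∀ x ∈ Ioo a b, HasDerivAt φ
      (-(2 / σ ^ 2) * ((Δ x) ^ 2)⁻¹ - deriv Δ x / Δ x) x := by
    intro x hx
    exact (hzd x hx).sub (((hΔat x hx).hasDerivAt).log (ne_of_gt (hΔpos x hx)))
  -- choose t₀
  have hδsmall : ∀ᶠ t in 𝓝[<] b, Δ t < 1 / (σ ^ 2 * M) := by
    have h1 : Tendsto Δ (𝓝[Icc a b] b) (𝓝 0) := by
      have := (hΔ.continuousOn b (right_mem_Icc.2 hab.le))
      rw [ContinuousWithinAt, hΔb] at this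
      exact this
    have h2 : 𝓝[<] b ≤ 𝓝[Icc a b] b := by
      apply nhdsWithin_le_of_mem
      rw [mem_nhdsWithin]
      exact ⟨Ioi a, isOpen_Ioi, hab, fun t ht => ⟨le_of_lt ht.1, le_of_lt ht.2⟩⟩
    have h3 : Tendsto Δ (𝓝[<] b) (𝓝 0) := h1.mono_left h2
    have : (0:ℝ) < 1 / (σ ^ 2 * M) := by positivity
    exact h3.eventually (eventually_lt_nhds this)
  obtain ⟨l, hlb, hl⟩ : ∃ l, l ∈ Iio b ∧ Ioo l b ⊆ {t | Δ t < 1 / (σ ^ 2 * M)} := by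
    rcases mem_nhdsLT_iff_exists_Ioo_subset.1 hδsmall with ⟨l, hl1, hl2⟩
    exact ⟨l, hl1, hl2⟩
  set t₀ : ℝ := (max l c + b) / 2 with ht₀def
  have hlcb : max l c < b := max_lt hlb hcb
  have ht₀mem : t₀ ∈ Ioo (max l c) b := ⟨by simp only [ht₀def]; linarith, by simp only [ht₀def]; linarith⟩
  have ht₀c : c < t₀ := lt_of_le_of_lt (le_max_right l c) ht₀mem.1
  have ht₀l : l < t₀ := lt_of_le_of_lt (le_max_left l c) ht₀mem.1
  have ht₀b : t₀ < b := ht₀mem.2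
  have ht₀I : ∀ t ∈ Ico t₀ b, t ∈ Ioo a b ∧ Δ t < 1 / (σ ^ 2 * M) := by
    intro t ht
    have h1 : t ∈ Ioo a b := ⟨lt_trans hac (lt_of_lt_of_le ht₀c ht.1), ht.2⟩
    exact ⟨h1, hl ⟨lt_of_lt_of_le ht₀l ht.1, ht.2⟩⟩
  -- ψ and its derivative
  set C : ℝ := 1 / (σ ^ 2 * M ^ 2) with hCdef
  have hC0 : 0 < C := by positivity
  set ψ : ℝ → ℝ := fun t => φ t + C * (b - t)⁻¹ with hψdef
  have hψd : ∀ x ∈ Ioo a b, HasDerivAt ψ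
      (-(2 / σ ^ 2) * ((Δ x) ^ 2)⁻¹ - deriv Δ x / Δ x + C * ((b - x) ^ 2)⁻¹) x := by
    intro x hx
    have hbx : b - x ≠ 0 := by have := hx.2; intro h; linarith [sub_eq_zero.1 h]
    have h1 : HasDerivAt (fun t => b - t) (-1 : ℝ) x := by
      simpa using (hasDerivAt_id x).const_sub b
    have h2 : HasDerivAt (fun t => (b - t)⁻¹) (((b - x) ^ 2)⁻¹) x := by
      have := h1.inv hbx
      exact this.congr_deriv (by ring)
    exact (hφd x hx).add (h2.const_mul C)
  -- derivative of ψ is nonpositive on [t₀, b)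
  have hψneg : ∀ x ∈ Ico t₀ b,
      -(2 / σ ^ 2) * ((Δ x) ^ 2)⁻¹ - deriv Δ x / Δ x + C * ((b - x) ^ 2)⁻¹ ≤ 0 := by
    intro x hx
    obtain ⟨hxI, hxε⟩ := ht₀I x hx
    have hD : 0 < Δ x := hΔpos x hxI
    have hu : 0 < b - x := by linarith [hxI.2]
    have hd : |deriv Δ x| ≤ M := hdb x hxI
    have hDM : Δ x ≤ M * (b - x) := hΔle x (Ioo_subset_Icc_self hxI)
    have hsmall : σ ^ 2 * M * Δ x ≤ 1 := by
      have h := hxε.le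
      rw [le_div_iff₀ (by positivity : (0:ℝ) < σ ^ 2 * M)] at h
      nlinarith [h]
    -- arithmetic
    have hσne : σ ≠ 0 := ne_of_gt hσ
    have hMne : M ≠ 0 := ne_of_gt hM0
    have hDne : Δ x ≠ 0 := ne_of_gt hD
    have hbxne : b - x ≠ 0 := ne_of_gt hu
    have hd1 : -(deriv Δ x) ≤ M := by
      have := (abs_le.1 hd).1
      linarith
    have s1 : -(deriv Δ x / Δ x) ≤ 1 / σ ^ 2 * ((Δ x) ^ 2)⁻¹ := by
      have ha : -(deriv Δ x) / Δ x ≤ M / Δ x := by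
        exact (div_le_div_iff_of_pos_right hD).2 hd1
      have hb : M / Δ x ≤ 1 / (σ ^ 2 * Δ x ^ 2) := by
        rw [div_le_div_iff₀ hD (by positivity)]
        nlinarith [hsmall, hD]
      have he : 1 / (σ ^ 2 * Δ x ^ 2) = 1 / σ ^ 2 * ((Δ x) ^ 2)⁻¹ := by field_simp
      calc -(deriv Δ x / Δ x) = -(deriv Δ x) / Δ x := by rw [neg_div]
      _ ≤ M / Δ x := ha
      _ ≤ 1 / (σ ^ 2 * Δ x ^ 2) := hb
      _ = 1 / σ ^ 2 * ((Δ x) ^ 2)⁻¹ := he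
    have s2 : C * ((b - x) ^ 2)⁻¹ ≤ 1 / σ ^ 2 * ((Δ x) ^ 2)⁻¹ := by
      have he1 : C * ((b - x) ^ 2)⁻¹ = 1 / (σ ^ 2 * M ^ 2 * (b - x) ^ 2) := by
        rw [hCdef]; field_simp
      have he2 : 1 / (σ ^ 2 * Δ x ^ 2) = 1 / σ ^ 2 * ((Δ x) ^ 2)⁻¹ := by field_simp
      have hb : 1 / (σ ^ 2 * M ^ 2 * (b - x) ^ 2) ≤ 1 / (σ ^ 2 * Δ x ^ 2) := by
        apply one_div_le_one_div_of_le (by positivity)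
        have h2 := mul_le_mul hDM hDM hD.le (by positivity : (0:ℝ) ≤ M * (b - x))
        nlinarith [h2, hσ2]
      calc C * ((b - x) ^ 2)⁻¹ = 1 / (σ ^ 2 * M ^ 2 * (b - x) ^ 2) := he1
      _ ≤ 1 / (σ ^ 2 * Δ x ^ 2) := hb
      _ = 1 / σ ^ 2 * ((Δ x) ^ 2)⁻¹ := he2
    have e : -(2 / σ ^ 2) * ((Δ x) ^ 2)⁻¹ = -2 * (1 / σ ^ 2 * ((Δ x) ^ 2)⁻¹) := by ring
    linarith [s1, s2, e.le, e.ge]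
  -- the key inequality
  have hIoo_ev : Ioo a b ∈ 𝓝[<] b := by
    rw [mem_nhdsWithin]
    exact ⟨Ioi a, isOpen_Ioi, hab, fun t ht => ⟨ht.1, ht.2⟩⟩
  have hIco_ev : Ico t₀ b ∈ 𝓝[<] b := by
    rw [mem_nhdsWithin]
    exact ⟨Ioi t₀, isOpen_Ioi, ht₀b, fun t ht => ⟨le_of_lt ht.1, ht.2⟩⟩
  have hkey : ∀ t ∈ Ico t₀ b, φ t ≤ ψ t₀ - C * (b - t)⁻¹ := by
    intro t ht
    have hsub : Icc t₀ t ⊆ Ico t₀ b := fun x hx => ⟨hx.1, lt_of_le_of_lt hx.2 ht.2⟩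
    have hsub2 : Icc t₀ t ⊆ Ioo a b := fun x hx => (ht₀I x (hsub hx)).1
    have hcont : ContinuousOn ψ (Icc t₀ t) := fun x hx =>
      ((hψd x (hsub2 hx)).continuousAt).continuousWithinAt
    have hdiff : DifferentiableOn ℝ ψ (interior (Icc t₀ t)) := by
      rw [interior_Icc]
      intro x hx
      exact ((hψd x (hsub2 (Ioo_subset_Icc_self hx))).differentiableAt).differentiableWithinAt
    have hderneg : ∀ x ∈ interior (Icc t₀ t), deriv ψ x ≤ 0 := by
      rw [interior_Icc]
      intro x hx
      have hxI : x ∈ Ico t₀ b := hsub (Ioo_subset_Icc_self hx)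
      rw [(hψd x (ht₀I x hxI).1).deriv]
      exact hψneg x hxI
    have hanti := antitoneOn_of_deriv_nonpos (convex_Icc t₀ t) hcont hdiff hderneg
    have h := hanti (left_mem_Icc.2 ht.1) (right_mem_Icc.2 ht.1) ht.1
    simp only [hψdef] at h ⊢
    linarith
  -- φ tends to -∞
  have hφbot : Tendsto φ (𝓝[<] b) atBot := by
    have h1 : Tendsto (fun t => b - t) (𝓝[<] b) (𝓝[>] (0:ℝ)) := by
      apply tendsto_nhdsWithin_of_tendsto_nhds_of_eventually_within
      · have : Tendsto (fun t => b - t) (𝓝 b) (𝓝 (b - b)) :=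
          (continuous_const.sub continuous_id).tendsto b
        rw [sub_self] at this
        exact this.mono_left nhdsWithin_le_nhds
      · filter_upwards [self_mem_nhdsWithin] with t ht
        exact sub_pos.2 (mem_Iio.1 ht)
    have h2 : Tendsto (fun t => (b - t)⁻¹) (𝓝[<] b) atTop := tendsto_inv_nhdsGT_zero.comp h1
    have h3 : Tendsto (fun t => C * (b - t)⁻¹) (𝓝[<] b) atTop := h2.const_mul_atTop hC0
    have h4 : Tendsto (fun t => ψ t₀ - C * (b - t)⁻¹) (𝓝[<] b) atBot := by
      have h5 : Tendsto (fun t => -(C * (b - t)⁻¹)) (𝓝[<] b) atBot :=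
        tendsto_neg_atTop_atBot.comp h3
      have h6 := tendsto_atBot_add_const_left (𝓝[<] b) (ψ t₀) h5
      have heq : (fun t => ψ t₀ + -(C * (b - t)⁻¹)) = fun t => ψ t₀ - C * (b - t)⁻¹ := by
        funext t; exact (sub_eq_add_neg _ _).symm
      rwa [heq] at h6
    apply tendsto_atBot_mono' (𝓝[<] b) _ h4
    filter_upwards [hIco_ev] with t ht
    exact hkey t ht
  -- f = exp ∘ φ eventually
  have hfφ : ∀ t ∈ Ioo a b, Real.exp (z t) / Δ t = Real.exp (φ t) := by
    intro t ht
    simp only [hφdef]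
    rw [Real.exp_sub, Real.exp_log (hΔpos t ht)]
  have htend0 : Tendsto (fun t => Real.exp (z t) / Δ t) (𝓝[<] b) (𝓝 0) := by
    have h := Real.tendsto_exp_atBot.comp hφbot
    apply h.congr'
    filter_upwards [hIoo_ev] with t ht
    exact (hfφ t ht).symm
  -- the extension g
  set g : ℝ → ℝ := fun t => if t < b then Real.exp (z t) / Δ t else 0 with hgdef
  have hgeq : ∀ t ∈ Ico c b, g t = Real.exp (z t) / Δ t := by
    intro t ht
    simp only [hgdef, if_pos ht.2]
  have hfc : ∀ x ∈ Ico c b, ContinuousAt (fun t => Real.exp (z t) / Δ t) x := by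
    intro x hx
    have hxI : x ∈ Ioo a b := ⟨lt_of_lt_of_le hac hx.1, hx.2⟩
    have hzc : ContinuousAt z x := (hzd x hxI).continuousAt
    have hΔc : ContinuousAt Δ x := (hΔat x hxI).continuousAt
    exact (Real.continuous_exp.continuousAt.comp hzc).div hΔc (ne_of_gt (hΔpos x hxI))
  have hgtend : Tendsto g (𝓝[<] b) (𝓝 0) := by
    apply htend0.congr'
    filter_upwards [self_mem_nhdsWithin] with t ht
    exact (if_pos ht).symm
  have hgcont : ContinuousOn g (Icc c b) := by
    intro x hx
    rcases eq_or_lt_of_le hx.2 with heq | hxb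
    · -- x = b
      subst heq
      have hsub : Icc c x ⊆ Iio x ∪ {x} := by
        intro t ht
        rcases eq_or_lt_of_le ht.2 with h | h
        · exact Or.inr (by simp [h])
        · exact Or.inl h
      have hle : 𝓝[Icc c x] x ≤ 𝓝[<] x ⊔ pure x := by
        calc 𝓝[Icc c x] x ≤ 𝓝[Iio x ∪ {x}] x := nhdsWithin_mono _ hsub
        _ = 𝓝[<] x ⊔ 𝓝[{x}] x := nhdsWithin_union _ _ _
        _ = 𝓝[<] x ⊔ pure x := by rw [nhdsWithin_singleton]
      have hb0 : g x = 0 := by simp [hgdef]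
      have hpure : Tendsto g (pure x) (𝓝 0) := by
        rw [tendsto_pure_left]
        intro s hs
        rw [hb0]
        exact mem_of_mem_nhds hs
      have : Tendsto g (𝓝[<] x ⊔ pure x) (𝓝 0) := by
        rw [tendsto_sup]
        exact ⟨hgtend, hpure⟩
      have := this.mono_left hle
      rw [ContinuousWithinAt, hb0]
      exact this
    · -- x < b
      have hfe : (fun t => Real.exp (z t) / Δ t) =ᶠ[𝓝 x] g := by
        filter_upwards [Iio_mem_nhds hxb] with t ht
        exact (if_pos ht).symm
      exact ((hfc x ⟨hx.1, hxb⟩).congr hfe).continuousWithinAt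
  refine ⟨htend0, ⟨g, hgcont, hgeq⟩, ?_⟩
  -- interval integrability
  have hgint : IntervalIntegrable g MeasureTheory.volume c b := by
    apply ContinuousOn.intervalIntegrable
    rwa [uIcc_of_le hcb.le]
  rw [intervalIntegrable_iff, uIoc_of_le hcb.le]
  have hgint' : MeasureTheory.IntegrableOn g (Ioc c b) MeasureTheory.volume := by
    rw [intervalIntegrable_iff, uIoc_of_le hcb.le] at hgint
    exact hgint
  have h0 : (MeasureTheory.volume.restrict (Ioc c b)) {b} = 0 := by
    refine le_antisymm ?_ zero_le
    calc (MeasureTheory.volume.restrict (Ioc c b)) {b} ≤ MeasureTheory.volume {b} :=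
      MeasureTheory.Measure.restrict_le_self _
    _ = 0 := Real.volume_singleton
  have h1 : ∀ᵐ t ∂(MeasureTheory.volume.restrict (Ioc c b)), t ≠ b := by
    rw [MeasureTheory.ae_iff]
    simpa using h0
  have h2 := MeasureTheory.ae_restrict_mem (μ := MeasureTheory.volume)
    (measurableSet_Ioc (a := c) (b := b))
  have hae : (fun t => Real.exp (z t) / Δ t)
      =ᵐ[MeasureTheory.volume.restrict (Ioc c b)] g := by
    filter_upwards [h1, h2] with t ht1 ht2
    have : t < b := lt_of_le_of_ne ht2.2 ht1
    exact (if_pos this).symm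
  exact hgint'.congr hae.symm
end

section
/- Under the stated hypotheses, the ratio Q(x)/Δ(x) tends to J as x → b⁻. -/
set_option maxHeartbeats 1000000


open Real Filter Set Topology intervalIntegral

/-- Under the stated hypotheses, the ratio `Q(x)/Δ(x)` tends to `J`
as `x → b⁻`. -/
theorem stmt_3 (a b c σ J : ℝ) (Δ : ℝ → ℝ)
    (hab : a < b)
    (hΔ : ContDiffOn ℝ 1 Δ (Icc a b))
    (hΔa : Δ a = 0) (hΔb : Δ b = 0)
    (hΔpos : ∀ θ ∈ Ioo a b, 0 < Δ θ)
    (hc : c ∈ Ioo a b) (hσ : 0 < σ)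
    (z : ℝ → ℝ)
    (hz : ∀ x, z x = -(2 / σ ^ 2) * ∫ s in c..x, ((Δ s) ^ 2)⁻¹)
    (Q : ℝ → ℝ)
    (hQ : ∀ x, Q x = (2 * J / σ ^ 2) * Real.exp (-(z x)) *
      ∫ t in x..b, Real.exp (z t) / Δ t) :
    Tendsto (fun x => Q x / Δ x) (𝓝[<] b) (𝓝 J) := by
  have hσ2 : (0:ℝ) < σ ^ 2 := by positivity
  set k : ℝ := 2 / σ ^ 2 with hk_def
  have hk0 : 0 < k := by positivity
  clear_value k
  set φ : ℝ → ℝ := derivWithin Δ (Icc a b) with hφ_def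
  clear_value φ
  have hΔc : ContinuousOn Δ (Icc a b) := hΔ.continuousOn
  have hφc : ContinuousOn φ (Icc a b) := by
    rw [hφ_def]
    exact hΔ.continuousOn_derivWithin (uniqueDiffOn_Icc hab) le_rfl
  -- derivative of Δ at interior points
  have hΔ' : ∀ x ∈ Ioo a b, HasDerivAt Δ (φ x) x := by
    intro x hx
    have hmem : Icc a b ∈ 𝓝 x := Icc_mem_nhds hx.1 hx.2
    have hd : DifferentiableWithinAt ℝ Δ (Icc a b) x :=
      hΔ.differentiableOn one_ne_zero x (Ioo_subset_Icc_self hx)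
    have hda : DifferentiableAt ℝ Δ x := hd.differentiableAt hmem
    have : φ x = deriv Δ x := by rw [hφ_def]; exact derivWithin_of_mem_nhds hmem
    rw [this]
    exact hda.hasDerivAt
  -- derivative of z at interior points
  have hzf : z = fun x => -k * ∫ s in c..x, ((Δ s) ^ 2)⁻¹ := funext hz
  have hg_cont : ContinuousOn (fun s => ((Δ s) ^ 2)⁻¹) (Ioo a b) :=
    ((hΔc.mono Ioo_subset_Icc_self).pow 2).inv₀
      (fun s hs => pow_ne_zero 2 (hΔpos s hs).ne')
  have hz' : ∀ x ∈ Ioo a b, HasDerivAt z (-k * ((Δ x) ^ 2)⁻¹) x := by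
    intro x hx
    have hsub : uIcc c x ⊆ Ioo a b := (Set.ordConnected_Ioo).uIcc_subset hc hx
    have hint : IntervalIntegrable (fun s => ((Δ s) ^ 2)⁻¹) MeasureTheory.volume c x :=
      (hg_cont.mono hsub).intervalIntegrable
    have hmeas := (hg_cont.stronglyMeasurableAtFilter (μ := MeasureTheory.volume) isOpen_Ioo) x hx
    have hca : ContinuousAt (fun s => ((Δ s) ^ 2)⁻¹) x :=
      hg_cont.continuousAt (isOpen_Ioo.mem_nhds hx)
    have H := (intervalIntegral.integral_hasDerivAt_right hint hmeas hca).const_mul (-k)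
    rw [hzf]
    exact H
  have hz_cont : ContinuousOn z (Ioo a b) :=
    fun x hx => ((hz' x hx).continuousAt).continuousWithinAt
  -- continuity of u := exp ∘ z / Δ on the interior
  have hu_cont : ContinuousOn (fun t => Real.exp (z t) / Δ t) (Ioo a b) :=
    (Real.continuous_exp.comp_continuousOn hz_cont).div
      (hΔc.mono Ioo_subset_Icc_self) (fun t ht => (hΔpos t ht).ne')
  -- Δ·φ tends to 0 at b⁻
  have hIooab : Ioo a b ∈ 𝓝[<] b := Ioo_mem_nhdsLT_of_mem ⟨hab, le_rfl⟩
  have hle : 𝓝[<] b ≤ 𝓝[Icc a b] b :=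
    nhdsWithin_le_of_mem (mem_of_superset hIooab Ioo_subset_Icc_self)
  have hbmem : b ∈ Icc a b := ⟨hab.le, le_rfl⟩
  have hΔ0 : Tendsto Δ (𝓝[<] b) (𝓝 0) := by
    have := (hΔc b hbmem).mono_left hle
    rwa [hΔb] at this
  have hΔφ0 : Tendsto (fun x => Δ x * φ x) (𝓝[<] b) (𝓝 0) := by
    have hφt : Tendsto φ (𝓝[<] b) (𝓝 (φ b)) := (hφc b hbmem).mono_left hle
    have := hΔ0.mul hφt
    simpa using this
  -- choose x₁ near b with |Δ·φ| ≤ k/2 on (x₁, b)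
  have hev : ∀ᶠ x in 𝓝[<] b, |Δ x * φ x| < k / 2 := by
    have := Metric.tendsto_nhds.mp hΔφ0 (k / 2) (by positivity)
    simpa only [Real.dist_eq, sub_zero] using this
  obtain ⟨l, hl, hsub⟩ := mem_nhdsLT_iff_exists_Ioo_subset.mp hev
  set x₁ : ℝ := max l c with hx₁_def
  have hx₁a : a < x₁ := lt_of_lt_of_le hc.1 (le_max_right _ _)
  have hx₁b : x₁ < b := max_lt hl hc.2
  have hx₁mem : x₁ ∈ Ioo a b := ⟨hx₁a, hx₁b⟩
  have hIcoIoo : Ico x₁ b ⊆ Ioo a b := fun t ht => ⟨hx₁a.trans_le ht.1, ht.2⟩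
  have hbd : ∀ x ∈ Ioo x₁ b, |Δ x * φ x| ≤ k / 2 := by
    intro x hx
    refine (hsub ⟨?_, hx.2⟩).le
    calc l ≤ x₁ := by rw [hx₁_def]; exact le_max_left l c
      _ < x := hx.1
  clear_value x₁
  -- the auxiliary function v = exp(z)·(Δ²)⁻¹ and its derivative
  set v : ℝ → ℝ := fun x => Real.exp (z x) * ((Δ x) ^ 2)⁻¹ with hv_def
  clear_value v
  have hv' : ∀ x ∈ Ioo a b,
      HasDerivAt v (Real.exp (z x) * (-k * ((Δ x) ^ 2)⁻¹) * ((Δ x) ^ 2)⁻¹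
        + Real.exp (z x) * (-((2:ℕ) * Δ x ^ 1 * φ x) / ((Δ x) ^ 2) ^ 2)) x := by
    intro x hx
    have hD : Δ x ≠ 0 := (hΔpos x hx).ne'
    have h1 : HasDerivAt (fun y => Real.exp (z y)) (Real.exp (z x) * (-k * ((Δ x) ^ 2)⁻¹)) x :=
      (hz' x hx).exp
    have h2 : HasDerivAt (fun y => ((Δ y) ^ 2)⁻¹)
        (-((2:ℕ) * Δ x ^ 1 * φ x) / ((Δ x) ^ 2) ^ 2) x :=
      ((hΔ' x hx).pow 2).inv (pow_ne_zero 2 hD)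
    rw [hv_def]
    exact h1.mul h2
  have hv_cont : ContinuousOn v (Ico x₁ b) :=
    fun x hx => ((hv' x (hIcoIoo hx)).continuousAt).continuousWithinAt
  have hv_anti : AntitoneOn v (Ico x₁ b) := by
    apply antitoneOn_of_deriv_nonpos (convex_Ico x₁ b) hv_cont
    · intro x hx
      rw [interior_Ico] at hx
      exact ((hv' x (hIcoIoo (Ioo_subset_Ico_self hx))).differentiableAt).differentiableWithinAt
    · intro x hx
      rw [interior_Ico] at hx
      have hxab : x ∈ Ioo a b := hIcoIoo (Ioo_subset_Ico_self hx)
      have hD : 0 < Δ x := hΔpos x hxab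
      rw [(hv' x hxab).deriv]
      have hDφ : |Δ x * φ x| ≤ k / 2 := hbd x hx
      have key : Real.exp (z x) * (-k * ((Δ x) ^ 2)⁻¹) * ((Δ x) ^ 2)⁻¹
          + Real.exp (z x) * (-((2:ℕ) * Δ x ^ 1 * φ x) / ((Δ x) ^ 2) ^ 2)
          = Real.exp (z x) * ((Δ x) ^ 2)⁻¹ * ((Δ x) ^ 2)⁻¹ * (-k - 2 * (Δ x * φ x)) := by
        field_simp
        ring
      rw [key]
      apply mul_nonpos_of_nonneg_of_nonpos
      · positivity
      · nlinarith [abs_le.mp hDφ]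
  set C : ℝ := v x₁ with hC_def
  clear_value C
  have hC0 : 0 < C := by
    have hD : 0 < Δ x₁ := hΔpos x₁ hx₁mem
    have h2 : 0 < ((Δ x₁) ^ 2)⁻¹ := by positivity
    rw [hC_def, hv_def]
    exact mul_pos (Real.exp_pos _) h2
  have hv_le : ∀ t ∈ Ico x₁ b, v t ≤ C := by
    intro t ht
    rw [hC_def]
    exact hv_anti ⟨le_rfl, hx₁b⟩ ht ht.1
  -- pointwise bounds
  obtain ⟨D₀, hD₀⟩ := (isCompact_Icc).exists_bound_of_continuousOn hΔc
  have hD₀0 : 0 ≤ D₀ := le_trans (norm_nonneg _) (hD₀ a ⟨le_rfl, hab.le⟩)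
  have hu_eq : ∀ t ∈ Ioo a b, Real.exp (z t) / Δ t = v t * Δ t := by
    intro t ht
    have hD : Δ t ≠ 0 := (hΔpos t ht).ne'
    rw [hv_def]
    field_simp
  have hΔle : ∀ t ∈ Icc a b, Δ t ≤ D₀ :=
    fun t ht => le_trans (le_abs_self _) (hD₀ t ht)
  have hu_bd : ∀ t ∈ Ico x₁ b, Real.exp (z t) / Δ t ≤ C * D₀ := by
    intro t ht
    have htab : t ∈ Ioo a b := hIcoIoo ht
    have hD : 0 < Δ t := hΔpos t htab
    rw [hu_eq t htab]
    calc v t * Δ t ≤ C * Δ t :=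
          mul_le_mul_of_nonneg_right (hv_le t ht) hD.le
      _ ≤ C * D₀ :=
          mul_le_mul_of_nonneg_left (hΔle t (Ioo_subset_Icc_self htab)) hC0.le
  have hu_pos : ∀ t ∈ Ioo a b, 0 < Real.exp (z t) / Δ t :=
    fun t ht => div_pos (Real.exp_pos _) (hΔpos t ht)
  -- integrability of u on (x, b)
  have hFint : ∀ x ∈ Ico x₁ b,
      IntervalIntegrable (fun t => Real.exp (z t) / Δ t) MeasureTheory.volume x b := by
    intro x hx
    rw [intervalIntegrable_iff_integrableOn_Ioc_of_le hx.2.le]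
    have hIoo : MeasureTheory.IntegrableOn (fun t => Real.exp (z t) / Δ t) (Ioo x b)
        MeasureTheory.volume := by
      refine ⟨((hu_cont.mono ?_).aestronglyMeasurable measurableSet_Ioo), ?_⟩
      · exact fun t ht => hIcoIoo ⟨hx.1.trans ht.1.le, ht.2⟩
      · refine MeasureTheory.HasFiniteIntegral.restrict_of_bounded (C := C * D₀)
          measure_Ioo_lt_top ?_
        refine (MeasureTheory.ae_restrict_iff' measurableSet_Ioo).mpr
          (MeasureTheory.ae_of_all _ fun t ht => ?_)
        have ht' : t ∈ Ico x₁ b := ⟨hx.1.trans ht.1.le, ht.2⟩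
        have := hu_bd t ht'
        have hpos := hu_pos t (hIcoIoo ht')
        rw [Real.norm_eq_abs, abs_of_pos hpos]
        exact this
    rwa [MeasureTheory.IntegrableOn, ← MeasureTheory.Measure.restrict_congr_set
      MeasureTheory.Ioo_ae_eq_Ioc]
  -- F and G
  set F : ℝ → ℝ := fun x => ∫ t in x..b, Real.exp (z t) / Δ t with hF_def
  clear_value F
  set G : ℝ → ℝ := fun x => Δ x * Real.exp (z x) with hG_def
  clear_value G
  have hIoox₁ : Ioo x₁ b ∈ 𝓝[<] b := Ioo_mem_nhdsLT_of_mem ⟨hx₁b, le_rfl⟩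
  -- F → 0
  have hF0 : Tendsto F (𝓝[<] b) (𝓝 0) := by
    apply squeeze_zero_norm' (a := fun x => (C * D₀) * |b - x|)
    · filter_upwards [hIoox₁] with x hx
      rw [hF_def]
      apply intervalIntegral.norm_integral_le_of_norm_le_const
      intro t ht
      rw [uIoc_of_le hx.2.le] at ht
      rcases eq_or_lt_of_le ht.2 with h | h
      · rw [h]
        simp [hΔb, div_zero]
        positivity
      · have ht' : t ∈ Ico x₁ b := ⟨(hx.1.trans ht.1).le, h⟩
        have hpos := hu_pos t (hIcoIoo ht')
        rw [Real.norm_eq_abs, abs_of_pos hpos]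
        exact hu_bd t ht'
    · have : Tendsto (fun x : ℝ => (C * D₀) * |b - x|) (𝓝 b) (𝓝 ((C * D₀) * |b - b|)) := by
        exact (continuous_const.mul ((continuous_const.sub continuous_id).abs)).tendsto b
      simp only [sub_self, abs_zero, mul_zero] at this
      exact this.mono_left nhdsWithin_le_nhds
  -- G → 0
  have hexp_eq : ∀ x ∈ Ioo a b, Real.exp (z x) = v x * (Δ x) ^ 2 := by
    intro x hx
    have hD : Δ x ≠ 0 := (hΔpos x hx).ne'
    rw [hv_def]
    field_simp
  have hG0 : Tendsto G (𝓝[<] b) (𝓝 0) := by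
    apply squeeze_zero_norm' (a := fun x => (C * D₀ ^ 2) * |Δ x|)
    · filter_upwards [hIoox₁] with x hx
      have hxab : x ∈ Ioo a b := hIcoIoo (Ioo_subset_Ico_self hx)
      have hD : 0 < Δ x := hΔpos x hxab
      have h1 : Real.exp (z x) ≤ C * D₀ ^ 2 := by
        rw [hexp_eq x hxab]
        have h2 : v x ≤ C := hv_le x (Ioo_subset_Ico_self hx)
        have h3 : Δ x ^ 2 ≤ D₀ ^ 2 := by
          have := hΔle x (Ioo_subset_Icc_self hxab)
          nlinarith
        nlinarith [hC0.le, sq_nonneg (Δ x), (Real.exp_pos (z x)).le,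
          mul_pos (Real.exp_pos (z x)) (pow_pos hD 2)]
      have hGx : G x = Δ x * Real.exp (z x) := by rw [hG_def]
      have hGpos : 0 < G x := by rw [hGx]; exact mul_pos hD (Real.exp_pos _)
      rw [Real.norm_eq_abs, abs_of_pos hGpos, hGx]
      calc Δ x * Real.exp (z x) ≤ Δ x * (C * D₀ ^ 2) :=
            mul_le_mul_of_nonneg_left h1 hD.le
        _ = (C * D₀ ^ 2) * Δ x := by ring
        _ ≤ (C * D₀ ^ 2) * |Δ x| := by
            apply mul_le_mul_of_nonneg_left (le_abs_self _)
            positivity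
    · have := hΔ0.abs.const_mul (C * D₀ ^ 2)
      simpa using this
  -- derivatives of F and G
  have hF' : ∀ x ∈ Ioo x₁ b, HasDerivAt F (-(Real.exp (z x) / Δ x)) x := by
    intro x hx
    have hxab : x ∈ Ioo a b := hIcoIoo (Ioo_subset_Ico_self hx)
    have hint := hFint x (Ioo_subset_Ico_self hx)
    have hmeas := (hu_cont.stronglyMeasurableAtFilter (μ := MeasureTheory.volume) isOpen_Ioo) x hxab
    have hca : ContinuousAt (fun t => Real.exp (z t) / Δ t) x :=
      hu_cont.continuousAt (isOpen_Ioo.mem_nhds hxab)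
    rw [hF_def]
    exact intervalIntegral.integral_hasDerivAt_left hint hmeas hca
  have hG' : ∀ x ∈ Ioo a b,
      HasDerivAt G (Real.exp (z x) * (φ x - k * (Δ x)⁻¹)) x := by
    intro x hx
    have hD : Δ x ≠ 0 := (hΔpos x hx).ne'
    have h := (hΔ' x hx).mul ((hz' x hx).exp)
    have heq : φ x * Real.exp (z x) + Δ x * (Real.exp (z x) * (-k * ((Δ x) ^ 2)⁻¹))
        = Real.exp (z x) * (φ x - k * (Δ x)⁻¹) := by
      field_simp
      ring
    rw [hG_def, ← heq]
    exact h
  -- nonvanishing of G'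
  have hg'ne : ∀ x ∈ Ioo x₁ b, Real.exp (z x) * (φ x - k * (Δ x)⁻¹) ≠ 0 := by
    intro x hx
    have hxab : x ∈ Ioo a b := hIcoIoo (Ioo_subset_Ico_self hx)
    have hD : 0 < Δ x := hΔpos x hxab
    have hDφ := abs_le.mp (hbd x hx)
    have hneg : φ x - k * (Δ x)⁻¹ < 0 := by
      rw [sub_neg, ← div_eq_mul_inv, lt_div_iff₀ hD]
      nlinarith [hDφ.2]
    exact mul_ne_zero (Real.exp_ne_zero _) hneg.ne
  -- limit of the ratio of derivatives
  have hdiv : Tendsto (fun x => (-(Real.exp (z x) / Δ x)) /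
      (Real.exp (z x) * (φ x - k * (Δ x)⁻¹))) (𝓝[<] b) (𝓝 k⁻¹) := by
    have h₁ : Tendsto (fun x => 1 / (k - Δ x * φ x)) (𝓝[<] b) (𝓝 (1 / (k - 0))) :=
      tendsto_const_nhds.div (tendsto_const_nhds.sub hΔφ0) (by simpa using hk0.ne')
    rw [sub_zero, one_div] at h₁
    refine h₁.congr' ?_
    filter_upwards [hIoox₁] with x hx
    have hxab : x ∈ Ioo a b := hIcoIoo (Ioo_subset_Ico_self hx)
    have hD : 0 < Δ x := hΔpos x hxab
    have hDφ := abs_le.mp (hbd x hx)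
    have hne : k - Δ x * φ x ≠ 0 := by nlinarith
    have hD' : Δ x ≠ 0 := hD.ne'
    have he : Real.exp (z x) ≠ 0 := Real.exp_ne_zero _
    have hED : Real.exp (z x) * (Δ x)⁻¹ ≠ 0 := mul_ne_zero he (inv_ne_zero hD')
    have h2 : φ x - k * (Δ x)⁻¹ = (Δ x)⁻¹ * (Δ x * φ x - k) := by
      field_simp
    rw [h2, ← mul_assoc, div_eq_mul_inv (Real.exp (z x)) (Δ x), neg_div,
      div_mul_cancel_left₀ hED, one_div, ← inv_neg, neg_sub]
  -- L'Hôpital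
  have hff' : ∀ᶠ x in 𝓝[<] b, HasDerivAt F (-(Real.exp (z x) / Δ x)) x := by
    filter_upwards [hIoox₁] with x hx using hF' x hx
  have hgg' : ∀ᶠ x in 𝓝[<] b, HasDerivAt G (Real.exp (z x) * (φ x - k * (Δ x)⁻¹)) x := by
    filter_upwards [hIooab] with x hx using hG' x hx
  have hg'ne' : ∀ᶠ x in 𝓝[<] b, Real.exp (z x) * (φ x - k * (Δ x)⁻¹) ≠ 0 := by
    filter_upwards [hIoox₁] with x hx using hg'ne x hx
  have htend : Tendsto (fun x => F x / G x) (𝓝[<] b) (𝓝 k⁻¹) :=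
    HasDerivAt.lhopital_zero_nhdsLT hff' hgg' hg'ne' hF0 hG0 hdiv
  -- conclusion
  have hfinal : Tendsto (fun x => (2 * J / σ ^ 2) * (F x / G x)) (𝓝[<] b)
      (𝓝 ((2 * J / σ ^ 2) * k⁻¹)) := htend.const_mul _
  have hJ : (2 * J / σ ^ 2) * k⁻¹ = J := by
    have hσ' : σ ≠ 0 := hσ.ne'
    rw [hk_def]
    field_simp
  rw [hJ] at hfinal
  have key : ∀ (A I e D : ℝ), e ≠ 0 → D ≠ 0 →
      (A * e⁻¹ * I) / D = A * (I / (D * e)) := by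
    intro A I e D he hD
    rw [div_eq_mul_inv, div_eq_mul_inv, mul_inv]
    ring
  refine hfinal.congr' ?_
  filter_upwards [hIooab] with x hx
  have hD : Δ x ≠ 0 := (hΔpos x hx).ne'
  have he : Real.exp (z x) ≠ 0 := Real.exp_ne_zero _
  rw [hQ x]
  simp only [hF_def, hG_def, Real.exp_neg]
  exact (key (2 * J / σ ^ 2) (∫ t in x..b, Real.exp (z t) / Δ t) (Real.exp (z x)) (Δ x)
    he hD).symm
end

section
/- Under the stated hypotheses, the product Δ(x) e^{z(x)} tends to +∞ as x → a⁺. -/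
open Real Filter Set Topology intervalIntegral

/-- Under the stated hypotheses, the product `Δ(x) e^{z(x)}` tends to
`+∞` as `x → a⁺`. -/
theorem stmt_4 (a b c σ : ℝ) (Δ : ℝ → ℝ)
    (hab : a < b)
    (hΔ : ContDiffOn ℝ 1 Δ (Icc a b))
    (hΔa : Δ a = 0) (hΔb : Δ b = 0)
    (hΔpos : ∀ θ ∈ Ioo a b, 0 < Δ θ)
    (hc : c ∈ Ioo a b) (hσ : 0 < σ)
    (z : ℝ → ℝ)
    (hz : ∀ x, z x = -(2 / σ ^ 2) * ∫ s in c..x, ((Δ s) ^ 2)⁻¹) :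
    Tendsto (fun x => Δ x * Real.exp (z x)) (𝓝[>] a) atTop := by
  have hσ2 : (0:ℝ) < σ ^ 2 := by positivity
  -- Bound on the derivative of Δ
  obtain ⟨C, hC⟩ := isCompact_Icc.exists_bound_of_continuousOn
    (hΔ.continuousOn_derivWithin (uniqueDiffOn_Icc hab) le_rfl)
  set M : ℝ := max C 1 with hMdef
  have hM1 : (1:ℝ) ≤ M := le_max_right _ _
  have hM0 : (0:ℝ) < M := lt_of_lt_of_le one_pos hM1
  have hbound : ∀ x ∈ Icc a b, ‖derivWithin Δ (Icc a b) x‖ ≤ M := fun x hx =>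
    (hC x hx).trans (le_max_left _ _)
  have hdiff : DifferentiableOn ℝ Δ (Icc a b) := hΔ.differentiableOn one_ne_zero
  -- Lipschitz bound Δ x ≤ M (x - a)
  have hLip : ∀ x ∈ Icc a b, Δ x ≤ M * (x - a) := by
    intro x hx
    have h := (convex_Icc a b).norm_image_sub_le_of_norm_derivWithin_le hdiff hbound
      (left_mem_Icc.2 hab.le) hx
    rw [hΔa, sub_zero] at h
    have h1 : |Δ x| ≤ M * |x - a| := by simpa [Real.norm_eq_abs] using h
    calc Δ x ≤ |Δ x| := le_abs_self _
      _ ≤ M * |x - a| := h1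
      _ = M * (x - a) := by rw [abs_of_nonneg (by linarith [hx.1])]
  -- derivative of Δ at interior points
  have hΔd : ∀ x ∈ Ioo a b, HasDerivAt Δ (derivWithin Δ (Icc a b) x) x := by
    intro x hx
    have hmem : Icc a b ∈ 𝓝 x := Icc_mem_nhds hx.1 hx.2
    rw [derivWithin_of_mem_nhds hmem]
    exact ((hdiff x (Ioo_subset_Icc_self hx)).differentiableAt hmem).hasDerivAt
  -- continuity of the integrand
  have hFcont : ContinuousOn (fun s => ((Δ s) ^ 2)⁻¹) (Ioo a b) :=
    ((hΔ.continuousOn.mono Ioo_subset_Icc_self).pow 2).inv₀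
      (fun s hs => pow_ne_zero 2 (hΔpos s hs).ne')
  -- derivative of z at interior points
  have hzfun : z = fun x => -(2 / σ ^ 2) * ∫ s in c..x, ((Δ s) ^ 2)⁻¹ := funext hz
  have hzd : ∀ x ∈ Ioo a b, HasDerivAt z (-(2 / σ ^ 2) * ((Δ x) ^ 2)⁻¹) x := by
    intro x hx
    rw [hzfun]
    have hsub : uIcc c x ⊆ Ioo a b := Set.ordConnected_Ioo.uIcc_subset hc hx
    have hint : IntervalIntegrable (fun s => ((Δ s) ^ 2)⁻¹) MeasureTheory.volume c x :=
      (hFcont.mono hsub).intervalIntegrable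
    have hmeas := hFcont.stronglyMeasurableAtFilter (μ := MeasureTheory.volume) isOpen_Ioo x hx
    have hct : ContinuousAt (fun s => ((Δ s) ^ 2)⁻¹) x :=
      hFcont.continuousAt (Ioo_mem_nhds hx.1 hx.2)
    exact (intervalIntegral.integral_hasDerivAt_right hint hmeas hct).const_mul _
  -- choose x₀ with Δ small on (a, x₀)
  have h0 : Tendsto Δ (𝓝[>] a) (𝓝 0) := by
    have h1 : ContinuousWithinAt Δ (Ioo a b) a :=
      (hΔ.continuousOn a (left_mem_Icc.2 hab.le)).mono Ioo_subset_Icc_self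
    have h2 : Ioo a b ∈ 𝓝[>] a :=
      inter_mem_nhdsWithin _ (Iio_mem_nhds hab)
    have h3 : 𝓝[>] a ≤ 𝓝[Ioo a b] a := nhdsWithin_le_of_mem h2
    simpa [hΔa] using h1.tendsto.mono_left h3
  have hev : ∀ᶠ x in 𝓝[>] a, x ∈ Ioo a b ∧ M * σ ^ 2 * Δ x < 1 := by
    have h1 : ∀ᶠ x in 𝓝[>] a, Δ x < 1 / (M * σ ^ 2) :=
      h0.eventually (gt_mem_nhds (by positivity))
    have h2 : Ioo a b ∈ 𝓝[>] a := inter_mem_nhdsWithin _ (Iio_mem_nhds hab)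
    filter_upwards [h1, h2] with x hx1 hx2
    refine ⟨hx2, ?_⟩
    rw [lt_div_iff₀ (by positivity)] at hx1
    nlinarith
  obtain ⟨x₀, hax₀, hx₀⟩ := (nhdsGT_basis a).eventually_iff.mp hev
  set k : ℝ := 1 / (σ ^ 2 * M ^ 2) with hkdef
  have hk0 : 0 < k := by positivity
  set G : ℝ → ℝ := fun y => Real.log (Δ y) + z y - k * (y - a)⁻¹ with hGdef
  -- derivative of G on Ioo a x₀
  have hG : ∀ x ∈ Ioo a x₀, HasDerivAt G
      (derivWithin Δ (Icc a b) x / Δ x + -(2 / σ ^ 2) * ((Δ x) ^ 2)⁻¹ - k * (-1 / (x - a) ^ 2)) x := by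
    intro x hx
    have hxab : x ∈ Ioo a b := (hx₀ hx).1
    have hD : 0 < Δ x := hΔpos x hxab
    have hlog := (hΔd x hxab).log hD.ne'
    have hxa : x - a ≠ 0 := sub_ne_zero.2 hxab.1.ne'
    have hinv : HasDerivAt (fun y => (y - a)⁻¹) (-1 / (x - a) ^ 2) x := by
      simpa [Pi.inv_def] using (((hasDerivAt_id x).sub_const a).inv hxa)
    exact ((hlog.add (hzd x hxab)).sub (hinv.const_mul k))
  -- the derivative is nonpositive
  have hG'le : ∀ x ∈ Ioo a x₀,
      derivWithin Δ (Icc a b) x / Δ x + -(2 / σ ^ 2) * ((Δ x) ^ 2)⁻¹ - k * (-1 / (x - a) ^ 2) ≤ 0 := by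
    intro x hx
    have hxab : x ∈ Ioo a b := (hx₀ hx).1
    have hsmall : M * σ ^ 2 * Δ x < 1 := (hx₀ hx).2
    have hD : 0 < Δ x := hΔpos x hxab
    have hxa : 0 < x - a := sub_pos.2 hxab.1
    have hP : derivWithin Δ (Icc a b) x ≤ M := by
      have := hbound x (Ioo_subset_Icc_self hxab)
      rw [Real.norm_eq_abs] at this
      exact (le_abs_self _).trans this
    have hLx : Δ x ≤ M * (x - a) := hLip x (Ioo_subset_Icc_self hxab)
    have h1 : derivWithin Δ (Icc a b) x / Δ x ≤ M / Δ x := by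
      rw [div_le_div_iff₀ hD hD]; nlinarith
    have h2 : M / Δ x ≤ 1 / (σ ^ 2 * Δ x ^ 2) := by
      rw [div_le_div_iff₀ hD (by positivity)]
      nlinarith
    have h3 : k * ((x - a) ^ 2)⁻¹ ≤ 1 / (σ ^ 2 * Δ x ^ 2) := by
      rw [hkdef, one_div, one_div, ← mul_inv]
      apply inv_anti₀ (by positivity)
      nlinarith [mul_self_le_mul_self hD.le hLx, sq_nonneg σ, mul_le_mul_of_nonneg_left (mul_self_le_mul_self hD.le hLx) hσ2.le]
    have e1 : -(2 / σ ^ 2) * ((Δ x) ^ 2)⁻¹ = -(1 / (σ ^ 2 * Δ x ^ 2) + 1 / (σ ^ 2 * Δ x ^ 2)) := by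
      field_simp
      ring
    have e2 : k * (-1 / (x - a) ^ 2) = -(k * ((x - a) ^ 2)⁻¹) := by
      field_simp
    rw [e1, e2]
    linarith
  -- G is antitone on Ioo a x₀
  have hanti : AntitoneOn G (Ioo a x₀) := by
    apply antitoneOn_of_deriv_nonpos (convex_Ioo a x₀)
    · exact fun x hx => (hG x hx).continuousAt.continuousWithinAt
    · rw [interior_Ioo]
      exact fun x hx => (hG x hx).differentiableAt.differentiableWithinAt
    · rw [interior_Ioo]
      intro x hx
      rw [(hG x hx).deriv]
      exact hG'le x hx
  -- fix x₁ in (a, x₀)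
  set x₁ : ℝ := (a + x₀) / 2 with hx₁def
  have hx₁mem : x₁ ∈ Ioo a x₀ := ⟨by simp [hx₁def]; linarith, by simp [hx₁def]; linarith⟩
  -- lower bound for log Δ + z
  have hlb : ∀ x ∈ Ioo a x₁, G x₁ + k * (x - a)⁻¹ ≤ Real.log (Δ x) + z x := by
    intro x hx
    have hxmem : x ∈ Ioo a x₀ := ⟨hx.1, hx.2.trans hx₁mem.2⟩
    have := hanti hxmem hx₁mem hx.2.le
    simp only [hGdef] at this ⊢
    linarith
  -- tendsto of the lower bound
  have htendlb : Tendsto (fun x => G x₁ + k * (x - a)⁻¹) (𝓝[>] a) atTop := by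
    apply tendsto_atTop_add_const_left
    apply Tendsto.const_mul_atTop hk0
    have hsub : Tendsto (fun x : ℝ => x - a) (𝓝[>] a) (𝓝[>] 0) := by
      apply tendsto_nhdsWithin_of_tendsto_nhds_of_eventually_within
      · have h := ((continuous_id.sub (continuous_const (y := a))).tendsto a).mono_left
          (nhdsWithin_le_nhds (s := Ioi a))
        simpa [Pi.sub_def] using h
      · filter_upwards [self_mem_nhdsWithin] with x hx
        exact sub_pos.2 (mem_Ioi.1 hx)
    exact tendsto_inv_nhdsGT_zero.comp hsub
  have hf : Tendsto (fun x => Real.log (Δ x) + z x) (𝓝[>] a) atTop := by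
    apply tendsto_atTop_mono' _ _ htendlb
    have hmem : Ioo a x₁ ∈ 𝓝[>] a := inter_mem_nhdsWithin _ (Iio_mem_nhds hx₁mem.1)
    filter_upwards [hmem] with x hx
    exact hlb x hx
  -- conclude
  have hEq : ∀ᶠ x in 𝓝[>] a, Real.exp (Real.log (Δ x) + z x) = Δ x * Real.exp (z x) := by
    filter_upwards [inter_mem_nhdsWithin _ (Iio_mem_nhds hab)] with x hx
    rw [Real.exp_add, Real.exp_log (hΔpos x hx)]
  exact (Real.tendsto_exp_atTop.comp hf).congr' hEq
end

section
/- Under the stated hypotheses, the integral ∫_x^b e^{z(t)}/Δ(t) dt tends to +∞ as x → a⁺. -/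
open Real Filter Set Topology intervalIntegral

/-- Under the stated hypotheses, the integral `∫_x^b e^{z(t)}/Δ(t) dt`
tends to `+∞` as `x → a⁺`. -/
theorem stmt_5 (a b c σ : ℝ) (Δ : ℝ → ℝ)
    (hab : a < b)
    (hΔ : ContDiffOn ℝ 1 Δ (Icc a b))
    (hΔa : Δ a = 0) (hΔb : Δ b = 0)
    (hΔpos : ∀ θ ∈ Ioo a b, 0 < Δ θ)
    (hc : c ∈ Ioo a b) (hσ : 0 < σ)
    (z : ℝ → ℝ)
    (hz : ∀ x, z x = -(2 / σ ^ 2) * ∫ s in c..x, ((Δ s) ^ 2)⁻¹) :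
    Tendsto (fun x => ∫ t in x..b, Real.exp (z t) / Δ t) (𝓝[>] a) atTop := by
  obtain ⟨hac, hcb⟩ := hc
  have hσ2 : (0:ℝ) < σ ^ 2 := by positivity
  have hΔcont : ContinuousOn Δ (Icc a b) := hΔ.continuousOn
  have hIoo : Ioo a b ⊆ Icc a b := Ioo_subset_Icc_self
  have hΔne : ∀ t ∈ Ioo a b, Δ t ≠ 0 := fun t ht => (hΔpos t ht).ne'
  set g : ℝ → ℝ := fun s => ((Δ s) ^ 2)⁻¹ with hgdef
  have hgcont : ContinuousOn g (Ioo a b) :=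
    ((hΔcont.mono hIoo).pow 2).inv₀ (fun t ht => pow_ne_zero 2 (hΔne t ht))
  have hsub : ∀ u ∈ Ioo a b, ∀ v ∈ Ioo a b, uIcc u v ⊆ Ioo a b :=
    fun u hu v hv => Set.OrdConnected.uIcc_subset Set.ordConnected_Ioo hu hv
  -- derivative of z
  have hzd : ∀ t ∈ Ioo a b, HasDerivAt z (-(2 / σ ^ 2) * g t) t := by
    intro t ht
    have hint : IntervalIntegrable g MeasureTheory.volume c t :=
      (hgcont.mono (hsub c ⟨hac, hcb⟩ t ht)).intervalIntegrable
    have hmeas := hgcont.stronglyMeasurableAtFilter isOpen_Ioo t ht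
      (μ := MeasureTheory.volume)
    have hct : ContinuousAt g t := hgcont.continuousAt (isOpen_Ioo.mem_nhds ht)
    have H := (intervalIntegral.integral_hasDerivAt_right hint hmeas hct).const_mul
      (-(2 / σ ^ 2))
    have hfe : (fun x => -(2 / σ ^ 2) * ∫ s in c..x, g s) = z := (funext hz).symm
    rw [hfe] at H
    exact H
  have hzcont : ContinuousOn z (Ioo a b) :=
    fun t ht => ((hzd t ht).continuousAt).continuousWithinAt
  have hzanti : AntitoneOn z (Ioo a b) := by
    apply antitoneOn_of_deriv_nonpos (convex_Ioo a b) hzcont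
    · intro t ht
      rw [interior_Ioo] at ht
      exact ((hzd t ht).differentiableAt).differentiableWithinAt
    · intro t ht
      rw [interior_Ioo] at ht
      rw [(hzd t ht).deriv]
      have h1 : (0:ℝ) ≤ 2 / σ ^ 2 := by positivity
      have h2 : (0:ℝ) ≤ g t := by positivity
      exact mul_nonpos_of_nonpos_of_nonneg (neg_nonpos.mpr h1) h2
  have hzc : z c = 0 := by rw [hz]; simp
  -- Lipschitz bound for Δ
  have hdiff : DifferentiableOn ℝ Δ (Icc a b) := hΔ.differentiableOn one_ne_zero
  have hd'cont : ContinuousOn (derivWithin Δ (Icc a b)) (Icc a b) :=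
    hΔ.continuousOn_derivWithin (uniqueDiffOn_Icc hab) le_rfl
  obtain ⟨M, hM⟩ := isCompact_Icc.exists_bound_of_continuousOn hd'cont
  set K := max M 1 with hKdef
  have hK1 : (1:ℝ) ≤ K := le_max_right _ _
  have hK0 : (0:ℝ) < K := lt_of_lt_of_le one_pos hK1
  have hMK : ∀ t ∈ Icc a b, ‖derivWithin Δ (Icc a b) t‖ ≤ K :=
    fun t ht => (hM t ht).trans (le_max_left _ _)
  have hlipb : ∀ x ∈ Icc a b, ∀ y ∈ Icc a b, ‖Δ y - Δ x‖ ≤ K * ‖y - x‖ :=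
    fun x hx y hy =>
      (convex_Icc a b).norm_image_sub_le_of_norm_derivWithin_le hdiff hMK hx hy
  have hΔle1 : ∀ t ∈ Icc a b, Δ t ≤ K * (t - a) := by
    intro t ht
    have h1 := hlipb a ⟨le_refl a, hab.le⟩ t ht
    rw [hΔa, sub_zero] at h1
    calc Δ t ≤ ‖Δ t‖ := le_abs_self _
      _ ≤ K * ‖t - a‖ := h1
      _ = K * (t - a) := by
          rw [Real.norm_eq_abs, abs_of_nonneg (sub_nonneg.mpr ht.1)]
  have hΔd : ∀ t ∈ Ioo a b, HasDerivAt Δ (derivWithin Δ (Icc a b) t) t := by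
    intro t ht
    have h1 : Icc a b ∈ 𝓝 t := Icc_mem_nhds ht.1 ht.2
    have h2 := (hdiff t (hIoo ht)).differentiableAt h1
    rw [derivWithin_of_mem_nhds h1]
    exact h2.hasDerivAt
  have hΔdlb : ∀ t ∈ Ioo a b, -K ≤ derivWithin Δ (Icc a b) t := by
    intro t ht
    have := hMK t (hIoo ht)
    rw [Real.norm_eq_abs] at this
    linarith [(abs_le.mp this).1]
  -- choose c' near b
  set ε := 2 / (K * σ ^ 2) with hεdef
  have hε0 : 0 < ε := by positivity
  have hev : ∀ᶠ t in 𝓝[Icc a b] b, Δ t < ε := by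
    have h1 : ContinuousWithinAt Δ (Icc a b) b := hΔcont b ⟨hab.le, le_refl b⟩
    have h2 : Tendsto Δ (𝓝[Icc a b] b) (𝓝 0) := by rw [← hΔb]; exact h1
    exact h2.eventually (gt_mem_nhds hε0)
  obtain ⟨δ, hδ0, hδ⟩ := Metric.mem_nhdsWithin_iff.mp hev
  set c' := max c (b - δ / 2) with hc'def
  have hcc' : c ≤ c' := le_max_left _ _
  have hc'b : c' < b := max_lt hcb (by linarith)
  have hc'a : a < c' := lt_of_lt_of_le hac hcc'
  have hc'mem : c' ∈ Ioo a b := ⟨hc'a, hc'b⟩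
  have hsmall : ∀ t ∈ Ico c' b, Δ t < ε := by
    intro t ht
    apply hδ
    constructor
    · rw [Metric.mem_ball, Real.dist_eq, abs_of_nonpos (by linarith [ht.2.le] : t - b ≤ 0)]
      have : b - δ / 2 ≤ c' := le_max_right _ _
      have := ht.1
      linarith
    · exact ⟨by linarith [hc'a, ht.1], ht.2.le⟩
  -- the function ψ = z - log ∘ Δ
  set ψ : ℝ → ℝ := fun t => z t - Real.log (Δ t) with hψdef
  have hψd : ∀ t ∈ Ioo a b,
      HasDerivAt ψ (-(2 / σ ^ 2) * g t - derivWithin Δ (Icc a b) t / Δ t) t :=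
    fun t ht => (hzd t ht).sub ((hΔd t ht).log (hΔne t ht))
  have hIcoSub : Ico c' b ⊆ Ioo a b := fun t ht => ⟨lt_of_lt_of_le hc'a ht.1, ht.2⟩
  have hψanti : AntitoneOn ψ (Ico c' b) := by
    apply antitoneOn_of_deriv_nonpos (convex_Ico c' b)
    · exact fun t ht => ((hψd t (hIcoSub ht)).continuousAt).continuousWithinAt
    · intro t ht
      rw [interior_Ico] at ht
      exact ((hψd t (hIcoSub (Ioo_subset_Ico_self ht))).differentiableAt).differentiableWithinAt
    · intro t ht
      rw [interior_Ico] at ht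
      have htio : t ∈ Ioo a b := hIcoSub (Ioo_subset_Ico_self ht)
      rw [(hψd t htio).deriv]
      have hu : 0 < Δ t := hΔpos t htio
      have hεt : Δ t < ε := hsmall t (Ioo_subset_Ico_self ht)
      have hd := hΔdlb t htio
      have key : K * Δ t ≤ 2 / σ ^ 2 := by
        have h5 : Δ t * (K * σ ^ 2) < 2 := (lt_div_iff₀ (by positivity)).mp hεt
        rw [le_div_iff₀ hσ2]
        nlinarith
      have h3 : -K * Δ t ≤ derivWithin Δ (Icc a b) t * Δ t :=
        mul_le_mul_of_nonneg_right hd hu.le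
      have h4 : -(2 / σ ^ 2) * (Δ t ^ 2)⁻¹ - derivWithin Δ (Icc a b) t / Δ t
          = (-(2 / σ ^ 2) - derivWithin Δ (Icc a b) t * Δ t) / Δ t ^ 2 := by
        field_simp
      rw [h4]
      apply div_nonpos_of_nonpos_of_nonneg _ (sq_nonneg _)
      nlinarith
  -- pointwise formula and bound near b
  have hfψ : ∀ t ∈ Ioo a b, Real.exp (z t) / Δ t = Real.exp (ψ t) := by
    intro t ht
    rw [hψdef]
    simp only [Real.exp_sub, Real.exp_log (hΔpos t ht)]
  have hbound : ∀ t ∈ Ico c' b, Real.exp (z t) / Δ t ≤ Real.exp (ψ c') := by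
    intro t ht
    rw [hfψ t (hIcoSub ht)]
    exact Real.exp_le_exp.mpr (hψanti ⟨le_refl c', hc'b⟩ ht ht.1)
  -- continuity and integrability of the integrand
  set f : ℝ → ℝ := fun t => Real.exp (z t) / Δ t with hfdef
  have hfcont : ContinuousOn f (Ioo a b) :=
    (Real.continuous_exp.comp_continuousOn hzcont).div (hΔcont.mono hIoo) hΔne
  have hfpos : ∀ t ∈ Ioo a b, 0 < f t := by
    intro t ht
    exact div_pos (Real.exp_pos _) (hΔpos t ht)
  have hint2 : IntervalIntegrable f MeasureTheory.volume c' b := by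
    rw [intervalIntegrable_iff_integrableOn_Ioc_of_le hc'b.le]
    have hIoo' : MeasureTheory.IntegrableOn f (Ioo c' b) MeasureTheory.volume := by
      refine ⟨(hfcont.mono (fun t ht => hIcoSub (Ioo_subset_Ico_self ht))).aestronglyMeasurable
        measurableSet_Ioo, ?_⟩
      apply MeasureTheory.HasFiniteIntegral.restrict_of_bounded
        (C := Real.exp (ψ c')) measure_Ioo_lt_top
      filter_upwards [MeasureTheory.ae_restrict_mem measurableSet_Ioo] with t ht
      rw [Real.norm_eq_abs, abs_of_pos (hfpos t (hIcoSub (Ioo_subset_Ico_self ht)))]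
      exact hbound t (Ioo_subset_Ico_self ht)
    exact hIoo'.congr_set_ae MeasureTheory.Ioo_ae_eq_Ioc.symm
  have hfint : ∀ x ∈ Ioo a b, IntervalIntegrable f MeasureTheory.volume x b := by
    intro x hx
    exact ((hfcont.mono (hsub x hx c' hc'mem)).intervalIntegrable).trans hint2
  set I₀ := ∫ t in c..b, f t with hI₀def
  -- main lower bound
  have hmain : ∀ x ∈ Ioo a c,
      K⁻¹ * Real.log ((c - a) / (x - a)) + I₀ ≤ ∫ t in x..b, f t := by
    intro x hx
    have hxb : x ∈ Ioo a b := ⟨hx.1, hx.2.trans hcb⟩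
    have h1 : IntervalIntegrable f MeasureTheory.volume x c :=
      (hfcont.mono (hsub x hxb c ⟨hac, hcb⟩)).intervalIntegrable
    have h2 : IntervalIntegrable f MeasureTheory.volume c b := hfint c ⟨hac, hcb⟩
    have hsplit : (∫ t in x..c, f t) + ∫ t in c..b, f t = ∫ t in x..b, f t :=
      intervalIntegral.integral_add_adjacent_intervals h1 h2
    have hinth : IntervalIntegrable (fun t => (K * (t - a))⁻¹) MeasureTheory.volume x c := by
      apply ContinuousOn.intervalIntegrable
      apply ContinuousOn.inv₀
        ((continuous_const.mul (continuous_id.sub continuous_const)).continuousOn)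
      intro t ht
      rw [Set.uIcc_of_le hx.2.le] at ht
      have h0 : 0 < K * (t - a) :=
        mul_pos hK0 (by linarith [lt_of_lt_of_le hx.1 ht.1])
      exact h0.ne'
    have hmono : (∫ t in x..c, (K * (t - a))⁻¹) ≤ ∫ t in x..c, f t := by
      apply intervalIntegral.integral_mono_on hx.2.le hinth h1
      intro t ht
      have ht' : t ∈ Ioo a b := ⟨lt_of_lt_of_le hx.1 ht.1, lt_of_le_of_lt ht.2 hcb⟩
      have hone : 1 ≤ Real.exp (z t) :=
        Real.one_le_exp (hzc ▸ hzanti ht' ⟨hac, hcb⟩ ht.2)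
      have hΔt := hΔpos t ht'
      have hle := hΔle1 t (hIoo ht')
      rw [hfdef]
      rw [inv_eq_one_div]
      exact div_le_div₀ (Real.exp_pos _).le hone hΔt hle
    have hcalc : (∫ t in x..c, (K * (t - a))⁻¹)
        = K⁻¹ * Real.log ((c - a) / (x - a)) := by
      have e1 : ∀ t : ℝ, (K * (t - a))⁻¹ = K⁻¹ * (t - a)⁻¹ := fun t => by rw [mul_inv]
      simp_rw [e1]
      rw [intervalIntegral.integral_const_mul]
      have e2 := intervalIntegral.integral_comp_sub_right (fun u : ℝ => u⁻¹) a
        (a := x) (b := c)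
      rw [e2, integral_inv]
      exact Set.notMem_uIcc_of_lt (by linarith [hx.1]) (by linarith [hac])
    rw [← hsplit, ← hcalc]
    exact add_le_add_left hmono _
  -- conclusion
  have htend : Tendsto (fun x => K⁻¹ * Real.log ((c - a) / (x - a)) + I₀)
      (𝓝[>] a) atTop := by
    apply tendsto_atTop_add_const_right
    apply Tendsto.const_mul_atTop (inv_pos.mpr hK0)
    have h1 : Tendsto (fun x => x - a) (𝓝[>] a) (𝓝[>] (0:ℝ)) := by
      apply tendsto_nhdsWithin_of_tendsto_nhds_of_eventually_within
      · have h0 : Tendsto (fun x : ℝ => x - a) (𝓝 a) (𝓝 (a - a)) :=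
          (continuous_id.sub continuous_const).tendsto a
        rw [sub_self] at h0
        exact h0.mono_left nhdsWithin_le_nhds
      · filter_upwards [self_mem_nhdsWithin] with x hx
        exact sub_pos.mpr (mem_Ioi.mp hx)
    have h2 : Tendsto (fun x => (c - a) / (x - a)) (𝓝[>] a) atTop := by
      simp_rw [div_eq_mul_inv]
      exact Tendsto.const_mul_atTop (by linarith) (tendsto_inv_nhdsGT_zero.comp h1)
    exact Real.tendsto_log_atTop.comp h2
  apply tendsto_atTop_mono' (𝓝[>] a) _ htend
  filter_upwards [Ioo_mem_nhdsGT_of_mem ⟨le_refl a, hac⟩] with x hx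
  exact hmain x hx
end

section
/- Under the stated hypotheses, the ratio Q(x)/Δ(x) tends to J as x → a⁺. -/
open Real Filter Set Topology intervalIntegral MeasureTheory

set_option maxHeartbeats 1000000 in
/-- Under the stated hypotheses, the ratio `Q(x)/Δ(x)` tends to `J`
as `x → a⁺`. -/
theorem stmt_6 (a b c σ J : ℝ) (Δ : ℝ → ℝ)
    (hab : a < b)
    (hΔ : ContDiffOn ℝ 1 Δ (Icc a b))
    (hΔa : Δ a = 0) (hΔb : Δ b = 0)
    (hΔpos : ∀ θ ∈ Ioo a b, 0 < Δ θ)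
    (hc : c ∈ Ioo a b) (hσ : 0 < σ)
    (z : ℝ → ℝ)
    (hz : ∀ x, z x = -(2 / σ ^ 2) * ∫ s in c..x, ((Δ s) ^ 2)⁻¹)
    (Q : ℝ → ℝ)
    (hQ : ∀ x, Q x = (2 * J / σ ^ 2) * Real.exp (-(z x)) *
      ∫ t in x..b, Real.exp (z t) / Δ t) :
    Tendsto (fun x => Q x / Δ x) (𝓝[>] a) (𝓝 J) := by
  obtain ⟨hac, hcb⟩ := hc
  have hσ2 : (0:ℝ) < σ ^ 2 := by positivity
  have hΔc : ContinuousOn Δ (Icc a b) := hΔ.continuousOn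
  have hsub : Ioo a b ⊆ Icc a b := Ioo_subset_Icc_self
  have hΔne : ∀ t ∈ Ioo a b, Δ t ≠ 0 := fun t ht => (hΔpos t ht).ne'
  -- the derivative of Δ
  set D : ℝ → ℝ := derivWithin Δ (Icc a b) with hDdef
  have hDcont : ContinuousOn D (Icc a b) :=
    hΔ.continuousOn_derivWithin (uniqueDiffOn_Icc hab) le_rfl
  have hΔder : ∀ t ∈ Ioo a b, HasDerivAt Δ (D t) t := by
    intro t ht
    have hmem : Icc a b ∈ 𝓝 t := Icc_mem_nhds ht.1 ht.2
    have h1 := (hΔ.differentiableOn one_ne_zero t (hsub ht)).differentiableAt hmem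
    rw [hDdef, derivWithin_of_mem_nhds hmem]
    exact h1.hasDerivAt
  obtain ⟨M, hM⟩ := isCompact_Icc.exists_bound_of_continuousOn hDcont
  set M' : ℝ := max M 1 with hM'def
  have hM'pos : (0:ℝ) < M' := lt_of_lt_of_le one_pos (le_max_right _ _)
  have hM' : ∀ t ∈ Icc a b, |D t| ≤ M' := fun t ht =>
    le_trans (by simpa using hM t ht) (le_max_left _ _)
  -- continuity and integrability of Δ⁻²
  have hf₀cont : ContinuousOn (fun s => ((Δ s) ^ 2)⁻¹) (Ioo a b) :=
    ((hΔc.mono hsub).pow 2).inv₀ (fun s hs => pow_ne_zero _ (hΔne s hs))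
  have hf₀int : ∀ x ∈ Ioo a b, ∀ y ∈ Ioo a b,
      IntervalIntegrable (fun s => ((Δ s) ^ 2)⁻¹) volume x y := fun x hx y hy =>
    (hf₀cont.mono (Set.ordConnected_Ioo.uIcc_subset hx hy)).intervalIntegrable
  -- derivative of z
  have hzd : ∀ t ∈ Ioo a b, HasDerivAt z (-(2/σ^2) * ((Δ t)^2)⁻¹) t := by
    intro t ht
    have h1 : HasDerivAt (fun u => ∫ s in c..u, ((Δ s)^2)⁻¹) (((Δ t)^2)⁻¹) t :=
      intervalIntegral.integral_hasDerivAt_right (hf₀int c ⟨hac, hcb⟩ t ht)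
        (hf₀cont.stronglyMeasurableAtFilter isOpen_Ioo t ht)
        (hf₀cont.continuousAt (isOpen_Ioo.mem_nhds ht))
    have h2 := h1.const_mul (-(2/σ^2))
    have hzfun : z = fun x => -(2 / σ ^ 2) * ∫ s in c..x, ((Δ s) ^ 2)⁻¹ := funext hz
    rw [hzfun]
    exact h2
  have hzc : ContinuousOn z (Ioo a b) := fun t ht => ((hzd t ht).continuousAt).continuousWithinAt
  -- z is antitone
  have hzmono : ∀ x ∈ Ioo a b, ∀ y ∈ Ioo a b, x ≤ y → z y ≤ z x := by
    intro x hx y hy hxy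
    have h1 : z y - z x = -(2/σ^2) * ∫ s in x..y, ((Δ s)^2)⁻¹ := by
      rw [hz, hz, ← mul_sub,
        intervalIntegral.integral_interval_sub_left (hf₀int c ⟨hac, hcb⟩ y hy)
          (hf₀int c ⟨hac, hcb⟩ x hx)]
    have h2 : 0 ≤ ∫ s in x..y, ((Δ s)^2)⁻¹ :=
      intervalIntegral.integral_nonneg hxy (fun u _ => by positivity)
    have h3 : 0 ≤ (2/σ^2) * ∫ s in x..y, ((Δ s)^2)⁻¹ :=
      mul_nonneg (by positivity) h2
    rw [neg_mul] at h1
    linarith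
  -- continuity of the integrand
  have hψcont : ContinuousOn (fun t => Real.exp (z t) / Δ t) (Ioo a b) :=
    (Real.continuous_exp.comp_continuousOn hzc).div (hΔc.mono hsub) hΔne
  have hDEcont : ContinuousOn (fun t => D t * Real.exp (z t)) (Ioo a b) :=
    (hDcont.mono hsub).mul (Real.continuous_exp.comp_continuousOn hzc)
  -- choose d₁ near a where Δ is small
  set ε₁ : ℝ := 1/(2*σ^2*M') with hε₁def
  have hε₁pos : 0 < ε₁ := by positivity
  obtain ⟨δ₁, hδ₁pos, hδ₁⟩ := Metric.continuousWithinAt_iff.1 (hΔc a ⟨le_rfl, hab.le⟩) ε₁ hε₁pos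
  set d₁ : ℝ := min (a + δ₁/2) c with hd₁def
  have hd₁a : a < d₁ := lt_min (by linarith) hac
  have hd₁c : d₁ ≤ c := min_le_right _ _
  have hd₁b : d₁ < b := lt_of_le_of_lt hd₁c hcb
  have hd₁mem : d₁ ∈ Ioo a b := ⟨hd₁a, hd₁b⟩
  have hΔsmall₁ : ∀ s ∈ Ioc a d₁, Δ s ≤ ε₁ := by
    intro s hs
    have hsmem : s ∈ Icc a b := ⟨hs.1.le, hs.2.trans hd₁b.le⟩
    have hdist : dist s a < δ₁ := by
      rw [Real.dist_eq, abs_of_pos (sub_pos.2 hs.1)]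
      have h1 : s ≤ a + δ₁/2 := hs.2.trans (min_le_left _ _)
      linarith
    have h2 := hδ₁ hsmem hdist
    rw [Real.dist_eq, hΔa, sub_zero] at h2
    exact (lt_of_abs_lt h2).le
  -- choose d₂ near b where Δ is small
  set ε₂ : ℝ := 2/(σ^2*M') with hε₂def
  have hε₂pos : 0 < ε₂ := by positivity
  obtain ⟨δ₂, hδ₂pos, hδ₂⟩ := Metric.continuousWithinAt_iff.1 (hΔc b ⟨hab.le, le_rfl⟩) ε₂ hε₂pos
  set d₂ : ℝ := max (b - δ₂/2) c with hd₂def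
  have hd₂b : d₂ < b := max_lt (by linarith) hcb
  have hd₂c : c ≤ d₂ := le_max_right _ _
  have hd₂a : a < d₂ := lt_of_lt_of_le hac hd₂c
  have hd₂mem : d₂ ∈ Ioo a b := ⟨hd₂a, hd₂b⟩
  have hd₁d₂ : d₁ ≤ d₂ := hd₁c.trans hd₂c
  have hΔsmall₂ : ∀ s ∈ Ico d₂ b, Δ s ≤ ε₂ := by
    intro s hs
    have hsmem : s ∈ Icc a b := ⟨(hd₂a.trans_le hs.1).le, hs.2.le⟩
    have hdist : dist s b < δ₂ := by
      rw [Real.dist_eq, abs_of_neg (sub_neg.2 hs.2)]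
      have h1 : b - δ₂/2 ≤ s := (le_max_left _ _).trans hs.1
      linarith
    have h2 := hδ₂ hsmem hdist
    rw [Real.dist_eq, hΔb, sub_zero] at h2
    exact (lt_of_abs_lt h2).le
  -- key smallness products
  have hΔD₁ : ∀ t ∈ Ioc a d₁, 2*σ^2*(Δ t * D t) ≤ 1 := by
    intro t ht
    have htI : t ∈ Ioo a b := ⟨ht.1, ht.2.trans_lt hd₁b⟩
    have h1 : Δ t * D t ≤ ε₁ * M' := by
      have h2 : D t ≤ M' := (le_abs_self _).trans (hM' t (hsub htI))
      have h3 : Δ t ≤ ε₁ := hΔsmall₁ t ht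
      nlinarith [hΔpos t htI, (abs_nonneg (D t)).trans (hM' t (hsub htI))]
    have h4 : 2*σ^2*(ε₁*M') = 1 := by
      rw [hε₁def]; field_simp
    nlinarith
  -- derivative of φ = exp(-z)/Δ² and its monotonicity on (a, d₁]
  have hIocsub₁ : Ioc a d₁ ⊆ Ioo a b := fun s hs => ⟨hs.1, hs.2.trans_lt hd₁b⟩
  have hφder : ∀ t ∈ Ioo a b, HasDerivAt (fun t => Real.exp (-(z t)) * ((Δ t)^2)⁻¹)
      ((Real.exp (-(z t)) * (-(-(2/σ^2) * ((Δ t)^2)⁻¹))) * ((Δ t)^2)⁻¹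
        + Real.exp (-(z t)) * (-((2:ℕ) * Δ t ^ (2-1) * D t) / ((Δ t)^2)^2)) t := by
    intro t ht
    exact ((hzd t ht).neg.exp).mul (((hΔder t ht).pow 2).inv (pow_ne_zero 2 (hΔne t ht)))
  have hφmono : MonotoneOn (fun t => Real.exp (-(z t)) * ((Δ t)^2)⁻¹) (Ioc a d₁) := by
    apply monotoneOn_of_deriv_nonneg (convex_Ioc a d₁)
    · exact ((Real.continuous_exp.comp_continuousOn hzc.neg).mul
        (((hΔc.mono hsub).pow 2).inv₀ fun s hs => pow_ne_zero _ (hΔne s hs))).mono hIocsub₁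
    · rw [interior_Ioc]
      intro t ht
      exact ((hφder t (hIocsub₁ (Ioo_subset_Ioc_self ht))).differentiableAt).differentiableWithinAt
    · rw [interior_Ioc]
      intro t ht
      have htIoc : t ∈ Ioc a d₁ := Ioo_subset_Ioc_self ht
      have htI : t ∈ Ioo a b := hIocsub₁ htIoc
      rw [(hφder t htI).deriv]
      have hident : (Real.exp (-(z t)) * (-(-(2/σ^2) * ((Δ t)^2)⁻¹))) * ((Δ t)^2)⁻¹
          + Real.exp (-(z t)) * (-((2:ℕ) * Δ t ^ (2-1) * D t) / ((Δ t)^2)^2)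
          = Real.exp (-(z t)) * (((Δ t)^2)⁻¹)^2 * (2/σ^2 - 2*(Δ t * D t)) := by
        have hne := hΔne t htI
        field_simp
        ring
      rw [hident]
      have h6 : 0 ≤ 2 - 2*σ^2*(Δ t*D t) := by linarith [hΔD₁ t htIoc]
      have h7 : (2 - 2*σ^2*(Δ t*D t))/σ^2 = 2/σ^2 - 2*(Δ t*D t) := by
        field_simp
      have h8 : 0 ≤ 2/σ^2 - 2*(Δ t*D t) := h7 ▸ div_nonneg h6 hσ2.le
      positivity
  -- ψ = exp z / Δ is antitone on [d₂, b)
  have hIcosub₂ : Ico d₂ b ⊆ Ioo a b := fun s hs => ⟨hd₂a.trans_le hs.1, hs.2⟩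
  have hψder : ∀ t ∈ Ioo a b, HasDerivAt (fun t => Real.exp (z t) / Δ t)
      (((Real.exp (z t) * (-(2/σ^2) * ((Δ t)^2)⁻¹)) * Δ t - Real.exp (z t) * D t) / Δ t ^ 2) t :=
    fun t ht => ((hzd t ht).exp).div (hΔder t ht) (hΔne t ht)
  have hψanti : AntitoneOn (fun t => Real.exp (z t) / Δ t) (Ico d₂ b) := by
    apply antitoneOn_of_deriv_nonpos (convex_Ico d₂ b)
    · exact hψcont.mono hIcosub₂
    · rw [interior_Ico]
      intro t ht
      exact ((hψder t (hIcosub₂ (Ioo_subset_Ico_self ht))).differentiableAt).differentiableWithinAt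
    · rw [interior_Ico]
      intro t ht
      have htIco : t ∈ Ico d₂ b := Ioo_subset_Ico_self ht
      have htI : t ∈ Ioo a b := hIcosub₂ htIco
      rw [(hψder t htI).deriv]
      apply div_nonpos_of_nonpos_of_nonneg _ (sq_nonneg _)
      have hne := hΔne t htI
      have hpos := hΔpos t htI
      have hMΔ : M' * Δ t ≤ 2/σ^2 := by
        have h1 : Δ t ≤ ε₂ := hΔsmall₂ t htIco
        have h2 : M' * Δ t ≤ M' * ε₂ := mul_le_mul_of_nonneg_left h1 hM'pos.le
        have h3 : M' * ε₂ = 2/σ^2 := by rw [hε₂def]; field_simp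
        linarith
      have hDge : -M' ≤ D t := by
        have := hM' t (hsub htI)
        exact neg_le_of_abs_le this |>.trans_eq rfl
      have hkey : 0 ≤ (2/σ^2) * (Δ t)⁻¹ + D t := by
        have h4 : M' ≤ (2/σ^2) * (Δ t)⁻¹ := by
          rw [← div_eq_mul_inv, le_div_iff₀ hpos]
          linarith
        linarith
      have hident : (Real.exp (z t) * (-(2/σ^2) * ((Δ t)^2)⁻¹)) * Δ t - Real.exp (z t) * D t
          = -(Real.exp (z t) * ((2/σ^2) * (Δ t)⁻¹ + D t)) := by
        field_simp
        ring
      rw [hident]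
      exact neg_nonpos_of_nonneg (mul_nonneg (Real.exp_pos _).le hkey)
  -- FTC identity on compact subintervals
  have hIperp : ∀ x ∈ Ioo a b, ∀ y ∈ Ioo a b, x ≤ y →
      (∫ t in x..y, Real.exp (z t) / Δ t)
      = (σ^2/2) * ((∫ t in x..y, D t * Real.exp (z t))
          + Δ x * Real.exp (z x) - Δ y * Real.exp (z y)) := by
    intro x hx y hy hxy
    have hsubI : uIcc x y ⊆ Ioo a b := Set.ordConnected_Ioo.uIcc_subset hx hy
    have hder : ∀ t ∈ uIcc x y, HasDerivAt (fun t => Δ t * Real.exp (z t))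
        (D t * Real.exp (z t) - (2/σ^2) * (Real.exp (z t) / Δ t)) t := by
      intro t ht
      have htI := hsubI ht
      have h1 := (hΔder t htI).mul ((hzd t htI).exp)
      have h2 : D t * Real.exp (z t) + Δ t * (Real.exp (z t) * (-(2/σ^2) * ((Δ t)^2)⁻¹))
          = D t * Real.exp (z t) - (2/σ^2) * (Real.exp (z t) / Δ t) := by
        have hne := hΔne t htI
        field_simp
        ring
      rw [h2] at h1
      exact h1
    have hint1 : IntervalIntegrable (fun t => D t * Real.exp (z t)) volume x y :=
      (hDEcont.mono hsubI).intervalIntegrable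
    have hint2 : IntervalIntegrable (fun t => Real.exp (z t) / Δ t) volume x y :=
      (hψcont.mono hsubI).intervalIntegrable
    have hFTC := intervalIntegral.integral_eq_sub_of_hasDerivAt hder
      (hint1.sub (hint2.const_mul (2/σ^2)))
    rw [intervalIntegral.integral_sub hint1 (hint2.const_mul (2/σ^2)),
      intervalIntegral.integral_const_mul] at hFTC
    have h5 : (2/σ^2) * (∫ t in x..y, Real.exp (z t) / Δ t)
        = (∫ t in x..y, D t * Real.exp (z t)) + Δ x * Real.exp (z x) - Δ y * Real.exp (z y) := by
      linarith
    have h6 : (σ^2/2) * ((2/σ^2) * (∫ t in x..y, Real.exp (z t) / Δ t))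
        = ∫ t in x..y, Real.exp (z t) / Δ t := by
      field_simp
    rw [← h6, h5]
  -- bound for ∫ exp(z) near a, via the derivative of Δ²·exp(z)
  have hGbound : ∀ x ∈ Ioo a d₁,
      (∫ t in x..d₁, Real.exp (z t)) ≤ σ^2 * ((Δ x)^2 * Real.exp (z x)) := by
    intro x hx
    have hxI : x ∈ Ioo a b := ⟨hx.1, hx.2.trans hd₁b⟩
    have hsubI : uIcc x d₁ ⊆ Ioo a b := Set.ordConnected_Ioo.uIcc_subset hxI hd₁mem
    have hsubI' : Icc x d₁ ⊆ Ioc a d₁ := fun s hs => ⟨hx.1.trans_le hs.1, hs.2⟩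
    have hGcont : ContinuousOn (fun t => (2*(Δ t * D t) - 2/σ^2) * Real.exp (z t)) (Ioo a b) :=
      ((continuousOn_const.mul ((hΔc.mono hsub).mul (hDcont.mono hsub))).sub
        continuousOn_const).mul (Real.continuous_exp.comp_continuousOn hzc)
    have hder₂ : ∀ t ∈ uIcc x d₁, HasDerivAt (fun t => (Δ t)^2 * Real.exp (z t))
        ((2*(Δ t * D t) - 2/σ^2) * Real.exp (z t)) t := by
      intro t ht
      have htI := hsubI ht
      have h1 := ((hΔder t htI).pow 2).mul ((hzd t htI).exp)
      have h2 : (↑(2:ℕ) * Δ t ^ (2-1) * D t) * Real.exp (z t)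
            + (Δ t)^2 * (Real.exp (z t) * (-(2/σ^2) * ((Δ t)^2)⁻¹))
          = (2*(Δ t * D t) - 2/σ^2) * Real.exp (z t) := by
        have hne := hΔne t htI
        field_simp
        ring
      rw [← h2]
      exact h1
    have hFTCG := intervalIntegral.integral_eq_sub_of_hasDerivAt hder₂
      ((hGcont.mono hsubI).intervalIntegrable)
    have hEint : IntervalIntegrable (fun t => Real.exp (z t)) volume x d₁ :=
      ((Real.continuous_exp.comp_continuousOn hzc).mono hsubI).intervalIntegrable
    have hmono : (∫ t in x..d₁, Real.exp (z t))
        ≤ ∫ t in x..d₁, (-(σ^2)) * ((2*(Δ t * D t) - 2/σ^2) * Real.exp (z t)) := by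
      apply intervalIntegral.integral_mono_on hx.2.le hEint
        ((continuousOn_const.mul (hGcont.mono hsubI)).intervalIntegrable)
      intro t ht
      have htIoc : t ∈ Ioc a d₁ := hsubI' ht
      have hident : (-(σ^2)) * ((2*(Δ t * D t) - 2/σ^2) * Real.exp (z t))
          = (2 - 2*σ^2*(Δ t * D t)) * Real.exp (z t) := by
        field_simp
        ring
      show Real.exp (z t) ≤ (-(σ^2)) * ((2*(Δ t * D t) - 2/σ^2) * Real.exp (z t))
      rw [hident]
      have h3 : (1:ℝ) ≤ 2 - 2*σ^2*(Δ t * D t) := by linarith [hΔD₁ t htIoc]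
      nlinarith [Real.exp_pos (z t)]
    rw [intervalIntegral.integral_const_mul, hFTCG] at hmono
    have h9 : 0 ≤ σ^2 * ((Δ d₁)^2 * Real.exp (z d₁)) := by positivity
    nlinarith
  -- integrability of the integrand up to b
  have hIocsub₂ : Ioc d₂ b ⊆ Icc a b := fun s hs => ⟨(hd₂a.trans hs.1).le, hs.2⟩
  have hint_tail : IntegrableOn (fun t => Real.exp (z t)/Δ t) (Ioc d₂ b) volume := by
    have hmeasb : AEStronglyMeasurable (fun t => Real.exp (z t)/Δ t)
        (volume.restrict (Ioc d₂ b)) := by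
      rw [← Measure.restrict_congr_set Ioo_ae_eq_Ioc]
      exact (hψcont.mono (fun s hs => ⟨hd₂a.trans hs.1, hs.2⟩)).aestronglyMeasurable
        measurableSet_Ioo
    refine ⟨hmeasb, ?_⟩
    apply HasFiniteIntegral.restrict_of_bounded
      (C := Real.exp (z d₂)/Δ d₂) measure_Ioc_lt_top
    rw [ae_restrict_iff' measurableSet_Ioc]
    refine Filter.Eventually.of_forall (fun t ht => ?_)
    rcases eq_or_lt_of_le ht.2 with hb' | hb'
    · rw [hb', hΔb, div_zero, norm_zero]
      exact (div_pos (Real.exp_pos _) (hΔpos d₂ hd₂mem)).le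
    · have htI : t ∈ Ioo a b := ⟨hd₂a.trans ht.1, hb'⟩
      rw [Real.norm_eq_abs, abs_of_nonneg (div_pos (Real.exp_pos _) (hΔpos t htI)).le]
      exact hψanti ⟨le_rfl, hd₂b⟩ ⟨ht.1.le, hb'⟩ ht.1.le
  have hint_tail_iv : IntervalIntegrable (fun t => Real.exp (z t)/Δ t) volume d₂ b :=
    (intervalIntegrable_iff_integrableOn_Ioc_of_le hd₂b.le).2 hint_tail
  -- bounds on the tail integral
  have hT0 : 0 ≤ ∫ t in d₂..b, Real.exp (z t)/Δ t := by
    rw [intervalIntegral.integral_of_le hd₂b.le]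
    apply setIntegral_nonneg measurableSet_Ioc
    intro t ht
    rcases eq_or_lt_of_le ht.2 with hb' | hb'
    · rw [hb', hΔb, div_zero]
    · exact (div_pos (Real.exp_pos _) (hΔpos t ⟨hd₂a.trans ht.1, hb'⟩)).le
  have hT1 : (∫ t in d₂..b, Real.exp (z t)/Δ t) ≤ (Real.exp (z d₂)/Δ d₂) * (b - d₂) := by
    rw [intervalIntegral.integral_of_le hd₂b.le]
    have h1 : (∫ t in Ioc d₂ b, Real.exp (z t)/Δ t)
        ≤ ∫ _ in Ioc d₂ b, Real.exp (z d₂)/Δ d₂ := by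
      apply setIntegral_mono_on hint_tail
        (integrableOn_const measure_Ioc_lt_top.ne) measurableSet_Ioc
      intro t ht
      rcases eq_or_lt_of_le ht.2 with hb' | hb'
      · rw [hb', hΔb, div_zero]
        exact (div_pos (Real.exp_pos _) (hΔpos d₂ hd₂mem)).le
      · exact hψanti ⟨le_rfl, hd₂b⟩ ⟨ht.1.le, hb'⟩ ht.1.le
    rw [setIntegral_const, Real.volume_real_Ioc_of_le hd₂b.le, smul_eq_mul] at h1
    linarith [h1]
  -- the constants
  set C₂ : ℝ := (σ^2/2) * (M' * Real.exp (z d₁) * (d₂ - d₁))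
      + (σ^2/2) * |Δ d₂ * Real.exp (z d₂)| + (Real.exp (z d₂)/Δ d₂) * (b - d₂) with hC₂def
  have hC₂ : 0 ≤ C₂ := by
    have h1 : (0:ℝ) ≤ Real.exp (z d₂)/Δ d₂ := (div_pos (Real.exp_pos _) (hΔpos d₂ hd₂mem)).le
    have h2 : (0:ℝ) ≤ d₂ - d₁ := by linarith
    have h3 : (0:ℝ) ≤ b - d₂ := by linarith
    have h4 : (0:ℝ) ≤ (σ^2/2) * (M' * Real.exp (z d₁) * (d₂ - d₁)) :=
      mul_nonneg (by positivity) (mul_nonneg (mul_nonneg hM'pos.le (Real.exp_pos _).le) h2)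
    have h5 : (0:ℝ) ≤ (σ^2/2) * |Δ d₂ * Real.exp (z d₂)| := by positivity
    have h6 : (0:ℝ) ≤ (Real.exp (z d₂)/Δ d₂) * (b - d₂) := mul_nonneg h1 h3
    rw [hC₂def]
    linarith
  set C₃ : ℝ := (2*|J|/σ^2) * ((σ^2/2)*M'*σ^2 + C₂*(Real.exp (-(z d₁)) * ((Δ d₁)^2)⁻¹)) with hC₃def
  -- the key pointwise estimate
  have hkey : ∀ x ∈ Ioo a d₁, |Q x / Δ x - J| ≤ C₃ * Δ x := by
    intro x hx
    have hxI : x ∈ Ioo a b := ⟨hx.1, hx.2.trans hd₁b⟩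
    have hΔx : 0 < Δ x := hΔpos x hxI
    have hxd₁ : x ≤ d₁ := hx.2.le
    have hxd₂ : x ≤ d₂ := hxd₁.trans hd₁d₂
    have hsub₁ : uIcc x d₁ ⊆ Ioo a b := Set.ordConnected_Ioo.uIcc_subset hxI hd₁mem
    have hsub₂ : uIcc d₁ d₂ ⊆ Ioo a b := Set.ordConnected_Ioo.uIcc_subset hd₁mem hd₂mem
    have hsub₃ : uIcc x d₂ ⊆ Ioo a b := Set.ordConnected_Ioo.uIcc_subset hxI hd₂mem
    have hDE1 : IntervalIntegrable (fun t => D t * Real.exp (z t)) volume x d₁ :=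
      (hDEcont.mono hsub₁).intervalIntegrable
    have hDE2 : IntervalIntegrable (fun t => D t * Real.exp (z t)) volume d₁ d₂ :=
      (hDEcont.mono hsub₂).intervalIntegrable
    have hψ1 : IntervalIntegrable (fun t => Real.exp (z t) / Δ t) volume x d₂ :=
      (hψcont.mono hsub₃).intervalIntegrable
    have hsplitb : (∫ t in x..b, Real.exp (z t) / Δ t)
        = (∫ t in x..d₂, Real.exp (z t) / Δ t) + ∫ t in d₂..b, Real.exp (z t) / Δ t :=
      (intervalIntegral.integral_add_adjacent_intervals hψ1 hint_tail_iv).symm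
    have hsplitA : (∫ t in x..d₂, D t * Real.exp (z t))
        = (∫ t in x..d₁, D t * Real.exp (z t)) + ∫ t in d₁..d₂, D t * Real.exp (z t) :=
      (intervalIntegral.integral_add_adjacent_intervals hDE1 hDE2).symm
    have hI1 := hIperp x hxI d₂ hd₂mem hxd₂
    -- bound on A₁
    have hA₁ : |∫ t in x..d₁, D t * Real.exp (z t)|
        ≤ M' * (σ^2 * ((Δ x)^2 * Real.exp (z x))) := by
      have hEint1 : IntervalIntegrable (fun t => M' * Real.exp (z t)) volume x d₁ :=
        ((continuousOn_const.mul (Real.continuous_exp.comp_continuousOn hzc)).mono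
          hsub₁).intervalIntegrable
      have h1 : ‖∫ t in x..d₁, D t * Real.exp (z t)‖
          ≤ |∫ t in x..d₁, M' * Real.exp (z t)| := by
        refine (intervalIntegral.norm_integral_le_of_norm_le hxd₁ ?_ hEint1).trans (le_abs_self _)
        rw [← uIoc_of_le hxd₁]
        refine Filter.Eventually.of_forall (fun t ht => ?_)
        rw [uIoc_of_le hxd₁] at ht
        have htIcc : t ∈ Icc a b := ⟨(hx.1.trans ht.1).le, ht.2.trans hd₁b.le⟩
        rw [Real.norm_eq_abs, abs_mul, abs_of_pos (Real.exp_pos _)]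
        exact mul_le_mul_of_nonneg_right (hM' t htIcc) (Real.exp_pos _).le
      have h2 : (∫ t in x..d₁, M' * Real.exp (z t)) = M' * ∫ t in x..d₁, Real.exp (z t) :=
        intervalIntegral.integral_const_mul _ _
      have h3 : 0 ≤ ∫ t in x..d₁, Real.exp (z t) :=
        intervalIntegral.integral_nonneg hxd₁ (fun u _ => (Real.exp_pos _).le)
      rw [Real.norm_eq_abs] at h1
      rw [h2, abs_of_nonneg (mul_nonneg hM'pos.le h3)] at h1
      exact h1.trans (mul_le_mul_of_nonneg_left (hGbound x hx) hM'pos.le)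
    -- bound on A₂
    have hA₂ : |∫ t in d₁..d₂, D t * Real.exp (z t)|
        ≤ M' * Real.exp (z d₁) * (d₂ - d₁) := by
      have h1 : ‖∫ t in d₁..d₂, D t * Real.exp (z t)‖
          ≤ (M' * Real.exp (z d₁)) * |d₂ - d₁| := by
        apply intervalIntegral.norm_integral_le_of_norm_le_const
        intro t ht
        rw [uIoc_of_le hd₁d₂] at ht
        have htI : t ∈ Ioo a b := ⟨hd₁a.trans ht.1, ht.2.trans_lt hd₂b⟩
        rw [Real.norm_eq_abs, abs_mul, abs_of_pos (Real.exp_pos _)]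
        have h2 : Real.exp (z t) ≤ Real.exp (z d₁) :=
          Real.exp_le_exp.2 (hzmono d₁ hd₁mem t htI ht.1.le)
        exact mul_le_mul (hM' t (hsub htI)) h2 (Real.exp_pos _).le hM'pos.le
      rw [Real.norm_eq_abs, abs_of_nonneg (by linarith : (0:ℝ) ≤ d₂ - d₁)] at h1
      linarith
    -- tail integral abbreviation facts already available : hT0, hT1
    -- the error estimate
    have heq : (∫ t in x..b, Real.exp (z t) / Δ t) - (σ^2/2) * (Δ x * Real.exp (z x))
        = (σ^2/2) * (∫ t in x..d₁, D t * Real.exp (z t))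
          + (σ^2/2) * (∫ t in d₁..d₂, D t * Real.exp (z t))
          - (σ^2/2) * (Δ d₂ * Real.exp (z d₂))
          + ∫ t in d₂..b, Real.exp (z t) / Δ t := by
      rw [hsplitb, hI1, hsplitA]
      ring
    have hE : |(∫ t in x..b, Real.exp (z t) / Δ t) - (σ^2/2) * (Δ x * Real.exp (z x))|
        ≤ (σ^2/2) * (M' * (σ^2 * ((Δ x)^2 * Real.exp (z x)))) + C₂ := by
      rw [heq]
      have hs2 : (0:ℝ) ≤ σ^2/2 := by positivity
      have hu1 := mul_le_mul_of_nonneg_left (abs_le.1 hA₁).2 hs2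
      have hl1 := mul_le_mul_of_nonneg_left (abs_le.1 hA₁).1 hs2
      have hu2 := mul_le_mul_of_nonneg_left (abs_le.1 hA₂).2 hs2
      have hl2 := mul_le_mul_of_nonneg_left (abs_le.1 hA₂).1 hs2
      have hu3 := mul_le_mul_of_nonneg_left (le_abs_self (Δ d₂ * Real.exp (z d₂))) hs2
      have hl3 := mul_le_mul_of_nonneg_left (neg_abs_le (Δ d₂ * Real.exp (z d₂))) hs2
      rw [hC₂def]
      apply abs_le.2
      constructor
      · nlinarith [hT0, hT1]
      · nlinarith [hT0, hT1]
    -- conclude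
    rw [hQ x]
    have hfact : 2 * J / σ ^ 2 * Real.exp (-z x) * (∫ t in x..b, Real.exp (z t) / Δ t) / Δ x - J
        = (2*J/σ^2) * ((Real.exp (-z x)/Δ x) *
            ((∫ t in x..b, Real.exp (z t) / Δ t) - (σ^2/2) * (Δ x * Real.exp (z x)))) := by
      rw [Real.exp_neg]
      field_simp
    rw [hfact, abs_mul, abs_mul]
    have habs1 : |2*J/σ^2| = 2*|J|/σ^2 := by
      rw [abs_div, abs_mul, abs_two, abs_of_pos hσ2]
    have hPpos : 0 < Real.exp (-z x)/Δ x := div_pos (Real.exp_pos _) hΔx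
    have hP : |Real.exp (-z x)/Δ x| = Real.exp (-z x)/Δ x := abs_of_pos hPpos
    have hPb : Real.exp (-z x)/Δ x ≤ (Real.exp (-(z d₁)) * ((Δ d₁)^2)⁻¹) * Δ x := by
      have h5 := hφmono (⟨hx.1, hxd₁⟩ : x ∈ Ioc a d₁) (⟨hd₁a, le_rfl⟩ : d₁ ∈ Ioc a d₁) hxd₁
      have h6 : Real.exp (-z x)/Δ x = (Real.exp (-z x) * ((Δ x)^2)⁻¹) * Δ x := by
        field_simp
      rw [h6]
      exact mul_le_mul_of_nonneg_right h5 hΔx.le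
    have hid : (Real.exp (-z x)/Δ x) * ((Δ x)^2 * Real.exp (z x)) = Δ x := by
      rw [Real.exp_neg]
      field_simp
    calc |2 * J / σ ^ 2| * (|Real.exp (-z x)/Δ x| *
          |(∫ t in x..b, Real.exp (z t) / Δ t) - (σ^2/2) * (Δ x * Real.exp (z x))|)
        ≤ (2*|J|/σ^2) * ((Real.exp (-z x)/Δ x) *
            ((σ^2/2) * (M' * (σ^2 * ((Δ x)^2 * Real.exp (z x)))) + C₂)) := by
          rw [habs1, hP]
          exact mul_le_mul_of_nonneg_left
            (mul_le_mul_of_nonneg_left hE hPpos.le) (by positivity)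
      _ = (2*|J|/σ^2) * ((σ^2/2)*M'*σ^2) * ((Real.exp (-z x)/Δ x) * ((Δ x)^2 * Real.exp (z x)))
          + (2*|J|/σ^2) * C₂ * (Real.exp (-z x)/Δ x) := by ring
      _ ≤ (2*|J|/σ^2) * ((σ^2/2)*M'*σ^2) * Δ x
          + (2*|J|/σ^2) * C₂ * ((Real.exp (-(z d₁)) * ((Δ d₁)^2)⁻¹) * Δ x) := by
          apply add_le_add (le_of_eq (by rw [hid]))
          exact mul_le_mul_of_nonneg_left hPb (mul_nonneg (by positivity) hC₂)
      _ = C₃ * Δ x := by rw [hC₃def]; ring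
  -- conclusion by squeezing
  have hΔ0 : Tendsto Δ (𝓝[>] a) (𝓝 0) := by
    have h1 : Tendsto Δ (𝓝[Icc a b] a) (𝓝 0) := by
      have := (hΔc a ⟨le_rfl, hab.le⟩ : ContinuousWithinAt Δ (Icc a b) a)
      rwa [ContinuousWithinAt, hΔa] at this
    apply h1.mono_left
    apply nhdsWithin_le_of_mem
    exact Filter.mem_of_superset (Ioo_mem_nhdsGT hab) Ioo_subset_Icc_self
  have h0 : Tendsto (fun x => C₃ * Δ x) (𝓝[>] a) (𝓝 0) := by
    simpa using hΔ0.const_mul C₃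
  have hsq : Tendsto (fun x => Q x / Δ x - J) (𝓝[>] a) (𝓝 0) := by
    apply squeeze_zero_norm' _ h0
    filter_upwards [Ioo_mem_nhdsGT hd₁a] with x hx
    rw [Real.norm_eq_abs]
    exact hkey x hx
  have := hsq.add_const J
  simpa using this
end

section
/- Let a < b be real numbers, Δ : [a,b] → ℝ continuously differentiable with Δ(a) = Δ(b) = 0 and Δ(θ) > 0 for θ ∈ (a,b), and let σ > 0 and J ∈ ℝ. Then there exists a continuous function P : [a,b] → ℝ, continuously differentiable on (a,b), such that P(a) = P(b) = J and the singular steady-state equation −J = −P(θ) + (σ²/2) Δ(θ) (Δ·P)'(θ) holds for all θ ∈ (a,b). -/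
open Real Filter Set Topology intervalIntegral

namespace Stmt7Aux

open MeasureTheory

noncomputable def fD (c : ℝ) (Δ : ℝ → ℝ) (u : ℝ) : ℝ := 1 / (c * Δ u ^ 2)

noncomputable def EE (a b c : ℝ) (Δ : ℝ → ℝ) (θ : ℝ) : ℝ := ∫ u in ((a + b) / 2)..θ, fD c Δ u

noncomputable def hD (a b c : ℝ) (Δ : ℝ → ℝ) (s : ℝ) : ℝ :=
  if s ∈ Ioo a b then Real.exp (-EE a b c Δ s) * deriv Δ s else 0

noncomputable def GG (a b c : ℝ) (Δ : ℝ → ℝ) (θ : ℝ) : ℝ := ∫ s in θ..b, hD a b c Δ s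

noncomputable def PP (a b c J : ℝ) (Δ : ℝ → ℝ) (θ : ℝ) : ℝ :=
  if θ ∈ Ioo a b then J + J * (GG a b c Δ θ * Real.exp (EE a b c Δ θ) / Δ θ) else J

section

variable {a b c M J : ℝ} {Δ : ℝ → ℝ}

lemma fD_nonneg (hc : 0 < c) (u : ℝ) : 0 ≤ fD c Δ u := by
  unfold fD; positivity

lemma mem_mid (hab : a < b) : (a + b) / 2 ∈ Ioo a b := ⟨by linarith, by linarith⟩

lemma contOn_fD (hc : 0 < c) (hΔ : ContDiffOn ℝ 1 Δ (Icc a b))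
    (hpos : ∀ θ ∈ Ioo a b, 0 < Δ θ) : ContinuousOn (fD c Δ) (Ioo a b) := by
  apply ContinuousOn.div continuousOn_const
  · exact continuousOn_const.mul ((hΔ.continuousOn.mono Ioo_subset_Icc_self).pow 2)
  · intro x hx
    have := hpos x hx
    positivity

lemma intInt_fD (hc : 0 < c) (hΔ : ContDiffOn ℝ 1 Δ (Icc a b))
    (hpos : ∀ θ ∈ Ioo a b, 0 < Δ θ) {x y : ℝ} (hx : x ∈ Ioo a b) (hy : y ∈ Ioo a b) :
    IntervalIntegrable (fD c Δ) volume x y :=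
  ((contOn_fD hc hΔ hpos).mono (Set.ordConnected_Ioo.uIcc_subset hx hy)).intervalIntegrable

lemma hasDerivAt_EE (hab : a < b) (hc : 0 < c) (hΔ : ContDiffOn ℝ 1 Δ (Icc a b))
    (hpos : ∀ θ ∈ Ioo a b, 0 < Δ θ) {θ : ℝ} (hθ : θ ∈ Ioo a b) :
    HasDerivAt (EE a b c Δ) (fD c Δ θ) θ :=
  intervalIntegral.integral_hasDerivAt_right (intInt_fD hc hΔ hpos (mem_mid hab) hθ)
    ⟨Ioo a b, isOpen_Ioo.mem_nhds hθ, (contOn_fD hc hΔ hpos).aestronglyMeasurable measurableSet_Ioo⟩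
    ((contOn_fD hc hΔ hpos).continuousAt (isOpen_Ioo.mem_nhds hθ))

lemma EE_sub (hab : a < b) (hc : 0 < c) (hΔ : ContDiffOn ℝ 1 Δ (Icc a b))
    (hpos : ∀ θ ∈ Ioo a b, 0 < Δ θ) {x y : ℝ} (hx : x ∈ Ioo a b) (hy : y ∈ Ioo a b) :
    EE a b c Δ y - EE a b c Δ x = ∫ u in x..y, fD c Δ u :=
  integral_interval_sub_left (intInt_fD hc hΔ hpos (mem_mid hab) hy)
    (intInt_fD hc hΔ hpos (mem_mid hab) hx)

lemma EE_mono (hab : a < b) (hc : 0 < c) (hΔ : ContDiffOn ℝ 1 Δ (Icc a b))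
    (hpos : ∀ θ ∈ Ioo a b, 0 < Δ θ) {x y : ℝ} (hx : x ∈ Ioo a b) (hy : y ∈ Ioo a b)
    (hxy : x ≤ y) : EE a b c Δ x ≤ EE a b c Δ y := by
  have h := EE_sub hab hc hΔ hpos hx hy
  have h2 : 0 ≤ ∫ u in x..y, fD c Δ u :=
    intervalIntegral.integral_nonneg hxy fun u _ => fD_nonneg hc u
  linarith

lemma contOn_EE (hab : a < b) (hc : 0 < c) (hΔ : ContDiffOn ℝ 1 Δ (Icc a b))
    (hpos : ∀ θ ∈ Ioo a b, 0 < Δ θ) : ContinuousOn (EE a b c Δ) (Ioo a b) :=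
  fun θ hθ => (hasDerivAt_EE hab hc hΔ hpos hθ).continuousAt.continuousWithinAt

lemma lipΔ (hΔ : ContDiffOn ℝ 1 Δ (Icc a b))
    (hM : ∀ x ∈ Icc a b, |derivWithin Δ (Icc a b) x| ≤ M)
    {x y : ℝ} (hx : x ∈ Icc a b) (hy : y ∈ Icc a b) : |Δ y - Δ x| ≤ M * |y - x| := by
  have h := Convex.norm_image_sub_le_of_norm_derivWithin_le (𝕜 := ℝ)
    (hΔ.differentiableOn one_ne_zero)
    (fun z hz => by simpa [Real.norm_eq_abs] using hM z hz) (convex_Icc a b) hx hy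
  simpa [Real.norm_eq_abs] using h

lemma derivWithin_eq {θ : ℝ} (hθ : θ ∈ Ioo a b) :
    derivWithin Δ (Icc a b) θ = deriv Δ θ :=
  derivWithin_of_mem_nhds (Icc_mem_nhds hθ.1 hθ.2)

lemma abs_deriv_le (hM : ∀ x ∈ Icc a b, |derivWithin Δ (Icc a b) x| ≤ M)
    {θ : ℝ} (hθ : θ ∈ Ioo a b) : |deriv Δ θ| ≤ M := by
  rw [← derivWithin_eq hθ]; exact hM θ (Ioo_subset_Icc_self hθ)

lemma hasDerivAt_Δ (hΔ : ContDiffOn ℝ 1 Δ (Icc a b)) {θ : ℝ} (hθ : θ ∈ Ioo a b) :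
    HasDerivAt Δ (deriv Δ θ) θ :=
  ((hΔ.differentiableOn one_ne_zero).differentiableAt (Icc_mem_nhds hθ.1 hθ.2)).hasDerivAt

lemma contOn_derivΔ (hab : a < b) (hΔ : ContDiffOn ℝ 1 Δ (Icc a b)) :
    ContinuousOn (deriv Δ) (Ioo a b) := by
  have h1 : ContinuousOn (derivWithin Δ (Icc a b)) (Icc a b) :=
    hΔ.continuousOn_derivWithin (uniqueDiffOn_Icc hab) le_rfl
  intro θ hθ
  have h2 : ContinuousAt (derivWithin Δ (Icc a b)) θ := h1.continuousAt (Icc_mem_nhds hθ.1 hθ.2)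
  have h3 : deriv Δ =ᶠ[𝓝 θ] derivWithin Δ (Icc a b) :=
    (eventually_of_mem (isOpen_Ioo.mem_nhds hθ)) fun x hx => (derivWithin_eq hx).symm
  exact (h2.congr h3.symm).continuousWithinAt

lemma hD_eqOn {s : ℝ} (hs : s ∈ Ioo a b) :
    hD a b c Δ s = Real.exp (-EE a b c Δ s) * deriv Δ s := if_pos hs

lemma contOn_hD (hab : a < b) (hc : 0 < c) (hΔ : ContDiffOn ℝ 1 Δ (Icc a b))
    (hpos : ∀ θ ∈ Ioo a b, 0 < Δ θ) : ContinuousOn (hD a b c Δ) (Ioo a b) :=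
  ((((contOn_EE hab hc hΔ hpos).neg).rexp).mul (contOn_derivΔ hab hΔ)).congr
    fun s hs => hD_eqOn hs

lemma intInt_hD (hab : a < b) (hc : 0 < c) (hΔ : ContDiffOn ℝ 1 Δ (Icc a b))
    (hpos : ∀ θ ∈ Ioo a b, 0 < Δ θ)
    (hM : ∀ x ∈ Icc a b, |derivWithin Δ (Icc a b) x| ≤ M)
    {θ : ℝ} (hθ : θ ∈ Ioo a b) : IntervalIntegrable (hD a b c Δ) volume θ b := by
  rw [intervalIntegrable_iff_integrableOn_Ioc_of_le hθ.2.le]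
  have hsub : Ioo θ b ⊆ Ioo a b := Ioo_subset_Ioo hθ.1.le le_rfl
  have hcont : ContinuousOn (hD a b c Δ) (Ioo θ b) := (contOn_hD hab hc hΔ hpos).mono hsub
  have hre : volume.restrict (Ioo θ b) = volume.restrict (Ioc θ b) :=
    Measure.restrict_congr_set Ioo_ae_eq_Ioc
  constructor
  · rw [← hre]; exact hcont.aestronglyMeasurable measurableSet_Ioo
  · apply HasFiniteIntegral.restrict_of_bounded (C := Real.exp (-EE a b c Δ θ) * M)
      (by rw [Real.volume_Ioc]; exact ENNReal.ofReal_lt_top)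
    rw [← hre]
    refine (ae_restrict_iff' measurableSet_Ioo).2 (ae_of_all _ fun s hs => ?_)
    have hsab := hsub hs
    rw [hD_eqOn hsab, Real.norm_eq_abs, abs_mul, abs_of_pos (Real.exp_pos _)]
    have h1 : Real.exp (-EE a b c Δ s) ≤ Real.exp (-EE a b c Δ θ) :=
      Real.exp_le_exp.2 (neg_le_neg (EE_mono hab hc hΔ hpos hθ hsab hs.1.le))
    exact mul_le_mul h1 (abs_deriv_le hM hsab) (abs_nonneg _) (Real.exp_pos _).le

lemma hasDerivAt_GG (hab : a < b) (hc : 0 < c) (hΔ : ContDiffOn ℝ 1 Δ (Icc a b))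
    (hpos : ∀ θ ∈ Ioo a b, 0 < Δ θ)
    (hM : ∀ x ∈ Icc a b, |derivWithin Δ (Icc a b) x| ≤ M)
    {θ : ℝ} (hθ : θ ∈ Ioo a b) :
    HasDerivAt (GG a b c Δ) (-(Real.exp (-EE a b c Δ θ) * deriv Δ θ)) θ := by
  have h := intervalIntegral.integral_hasDerivAt_left (intInt_hD hab hc hΔ hpos hM hθ)
    ⟨Ioo a b, isOpen_Ioo.mem_nhds hθ,
      (contOn_hD hab hc hΔ hpos).aestronglyMeasurable measurableSet_Ioo⟩
    ((contOn_hD hab hc hΔ hpos).continuousAt (isOpen_Ioo.mem_nhds hθ))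
  rw [hD_eqOn hθ] at h
  exact h

lemma EE_lower (hab : a < b) (hc : 0 < c) (hΔ : ContDiffOn ℝ 1 Δ (Icc a b))
    (hpos : ∀ θ ∈ Ioo a b, 0 < Δ θ)
    (hM : ∀ x ∈ Icc a b, |derivWithin Δ (Icc a b) x| ≤ M) (hM0 : 0 ≤ M)
    {θ s : ℝ} (hθ : θ ∈ Ioo a b) (hs : s ∈ Ioo a b) (hθs : θ ≤ s) :
    min (s - θ) (Δ θ) / (c * (1 + M) ^ 2 * Δ θ ^ 2) ≤ EE a b c Δ s - EE a b c Δ θ := by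
  set d := Δ θ with hd
  have hd0 : 0 < d := hpos θ hθ
  set s' := min s (θ + d) with hs'def
  have h1 : θ ≤ s' := le_min hθs (by linarith)
  have h2 : s' ≤ s := min_le_left _ _
  have hs'mem : s' ∈ Ioo a b := ⟨lt_of_lt_of_le hθ.1 h1, lt_of_le_of_lt h2 hs.2⟩
  have hsub := EE_sub hab hc hΔ hpos hθ hs
  have hsplit : (∫ u in θ..s', fD c Δ u) + (∫ u in s'..s, fD c Δ u) = ∫ u in θ..s, fD c Δ u :=
    intervalIntegral.integral_add_adjacent_intervals (intInt_fD hc hΔ hpos hθ hs'mem)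
      (intInt_fD hc hΔ hpos hs'mem hs)
  have hnn : 0 ≤ ∫ u in s'..s, fD c Δ u :=
    intervalIntegral.integral_nonneg h2 fun u _ => fD_nonneg hc u
  have hptwise : ∀ u ∈ Icc θ s', 1 / (c * (1 + M) ^ 2 * d ^ 2) ≤ fD c Δ u := by
    intro u hu
    have huIoo : u ∈ Ioo a b := ⟨lt_of_lt_of_le hθ.1 hu.1, lt_of_le_of_lt (hu.2.trans h2) hs.2⟩
    have hΔu : 0 < Δ u := hpos u huIoo
    have hlip := lipΔ hΔ hM (Ioo_subset_Icc_self hθ) (Ioo_subset_Icc_self huIoo)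
    have h5 : u - θ ≤ d := by
      have := hu.2.trans (min_le_right s (θ + d))
      linarith
    have h6 : |Δ u - d| ≤ M * (u - θ) := by
      rwa [abs_of_nonneg (by linarith [hu.1] : (0:ℝ) ≤ u - θ)] at hlip
    have hub : Δ u ≤ (1 + M) * d := by
      have := (abs_le.1 h6).2
      nlinarith
    have hden : 0 < c * Δ u ^ 2 := by positivity
    unfold fD
    apply one_div_le_one_div_of_le hden
    have hsq : Δ u * Δ u ≤ ((1 + M) * d) * ((1 + M) * d) :=
      mul_le_mul hub hub hΔu.le (by positivity)
    nlinarith [hsq, hc]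
  have hkey : min (s - θ) d / (c * (1 + M) ^ 2 * d ^ 2) ≤ ∫ u in θ..s', fD c Δ u := by
    have hconst : ∫ u in θ..s', (1 / (c * (1 + M) ^ 2 * d ^ 2) : ℝ) =
        (s' - θ) * (1 / (c * (1 + M) ^ 2 * d ^ 2)) := by
      rw [intervalIntegral.integral_const, smul_eq_mul]
    have hmono := intervalIntegral.integral_mono_on h1 (intervalIntegrable_const)
      (intInt_fD hc hΔ hpos hθ hs'mem) hptwise
    have hs'θ : s' - θ = min (s - θ) d := by
      rw [hs'def, ← min_sub_sub_right]
      congr 1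
      ring
    rw [hconst, hs'θ] at hmono
    calc min (s - θ) d / (c * (1 + M) ^ 2 * d ^ 2)
        = min (s - θ) d * (1 / (c * (1 + M) ^ 2 * d ^ 2)) := by ring
      _ ≤ _ := hmono
  linarith

lemma GG_bound (hab : a < b) (hc : 0 < c) (hΔ : ContDiffOn ℝ 1 Δ (Icc a b))
    (hpos : ∀ θ ∈ Ioo a b, 0 < Δ θ)
    (hM : ∀ x ∈ Icc a b, |derivWithin Δ (Icc a b) x| ≤ M) (hM0 : 0 ≤ M)
    {θ : ℝ} (hθ : θ ∈ Ioo a b) :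
    |GG a b c Δ θ| ≤ Real.exp (-EE a b c Δ θ) * M *
      (c * (1 + M) ^ 2 * Δ θ ^ 2 +
        (b - a) * Real.exp (-(Δ θ / (c * (1 + M) ^ 2 * Δ θ ^ 2)))) := by
  set d := Δ θ with hdd
  have hd0 : 0 < d := hpos θ hθ
  set B := c * (1 + M) ^ 2 * d ^ 2 with hB
  have hB0 : 0 < B := by positivity
  set C0 := Real.exp (-EE a b c Δ θ) * M with hC0def
  have hC0 : 0 ≤ C0 := by positivity
  set φ : ℝ → ℝ := fun s => C0 * (Real.exp (-((s - θ) / B)) + Real.exp (-(d / B))) with hφ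
  have hφcont : Continuous φ := by fun_prop
  have hφint : IntervalIntegrable φ volume θ b := hφcont.intervalIntegrable _ _
  have hbound : ∀ᵐ t ∂volume.restrict (Set.uIoc θ b), ‖hD a b c Δ t‖ ≤ φ t := by
    rw [uIoc_of_le hθ.2.le]
    refine (ae_restrict_iff' measurableSet_Ioc).2 (ae_of_all _ fun t ht => ?_)
    by_cases htI : t ∈ Ioo a b
    · rw [show hD a b c Δ t = Real.exp (-EE a b c Δ t) * deriv Δ t from if_pos htI,
        Real.norm_eq_abs, abs_mul, abs_of_pos (Real.exp_pos _)]
      have hEE := EE_lower hab hc hΔ hpos hM hM0 hθ htI ht.1.le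
      have h1 : Real.exp (-EE a b c Δ t) ≤
          Real.exp (-EE a b c Δ θ) * Real.exp (-(min (t - θ) d / B)) := by
        rw [← Real.exp_add]
        apply Real.exp_le_exp.2
        linarith
      have h2 : Real.exp (-(min (t - θ) d / B)) ≤
          Real.exp (-((t - θ) / B)) + Real.exp (-(d / B)) := by
        rcases min_cases (t - θ) d with ⟨hmin, _⟩ | ⟨hmin, _⟩ <;> rw [hmin] <;>
          [linarith [(Real.exp_pos (-(d / B))).le];
           linarith [(Real.exp_pos (-((t - θ) / B))).le]]
      calc Real.exp (-EE a b c Δ t) * |deriv Δ t|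
          ≤ (Real.exp (-EE a b c Δ θ) * Real.exp (-(min (t - θ) d / B))) * M :=
            mul_le_mul h1 (abs_deriv_le hM htI) (abs_nonneg _) (by positivity)
        _ ≤ (Real.exp (-EE a b c Δ θ) * (Real.exp (-((t - θ) / B)) + Real.exp (-(d / B)))) * M := by
            have := Real.exp_pos (-EE a b c Δ θ)
            nlinarith [h2]
        _ = φ t := by rw [hφ, hC0def]; ring
    · rw [show hD a b c Δ t = 0 from if_neg htI]
      simp only [norm_zero]
      rw [hφ]
      positivity
  have hGle : ‖GG a b c Δ θ‖ ≤ |∫ t in θ..b, φ t| :=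
    intervalIntegral.norm_integral_le_abs_of_norm_le hbound hφint
  have hexpint : IntervalIntegrable (fun s => Real.exp (-((s - θ) / B))) volume θ b :=
    (by fun_prop : Continuous fun s : ℝ => Real.exp (-((s - θ) / B))).intervalIntegrable _ _
  have hderF : ∀ x ∈ uIcc θ b, HasDerivAt (fun s => -B * Real.exp (-((s - θ) / B)))
      (Real.exp (-((x - θ) / B))) x := by
    intro x _
    have h := (((hasDerivAt_id x).sub_const θ).div_const B).neg.exp
    have h2 := h.const_mul (-B)
    refine h2.congr_deriv ?_
    simp only [Pi.neg_apply, id]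
    field_simp [hB0.ne']
  have hint1 : ∫ s in θ..b, Real.exp (-((s - θ) / B)) =
      -B * Real.exp (-((b - θ) / B)) - -B * Real.exp (-((θ - θ) / B)) :=
    intervalIntegral.integral_eq_sub_of_hasDerivAt hderF hexpint
  have hint1le : ∫ s in θ..b, Real.exp (-((s - θ) / B)) ≤ B := by
    rw [hint1]
    simp only [sub_self, zero_div, neg_zero, Real.exp_zero, mul_one]
    nlinarith [Real.exp_pos (-((b - θ) / B))]
  have hint1nn : 0 ≤ ∫ s in θ..b, Real.exp (-((s - θ) / B)) :=
    intervalIntegral.integral_nonneg hθ.2.le fun u _ => (Real.exp_pos _).le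
  have hintφ : ∫ t in θ..b, φ t =
      C0 * ((∫ s in θ..b, Real.exp (-((s - θ) / B))) + (b - θ) * Real.exp (-(d / B))) := by
    rw [hφ]
    rw [intervalIntegral.integral_const_mul]
    congr 1
    rw [intervalIntegral.integral_add hexpint intervalIntegrable_const,
      intervalIntegral.integral_const, smul_eq_mul]
  have hφle : ∫ t in θ..b, φ t ≤ C0 * (B + (b - a) * Real.exp (-(d / B))) := by
    rw [hintφ]
    apply mul_le_mul_of_nonneg_left _ hC0
    have hba : b - θ ≤ b - a := by have := hθ.1; linarith
    nlinarith [Real.exp_pos (-(d / B)), hint1le]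
  have hφnn : 0 ≤ ∫ t in θ..b, φ t := by
    rw [hintφ]
    have h1 : (0:ℝ) ≤ b - θ := le_of_lt (sub_pos.2 hθ.2)
    exact mul_nonneg hC0 (add_nonneg hint1nn (mul_nonneg h1 (Real.exp_pos _).le))
  rw [Real.norm_eq_abs] at hGle
  calc |GG a b c Δ θ| ≤ |∫ t in θ..b, φ t| := hGle
    _ = ∫ t in θ..b, φ t := abs_of_nonneg hφnn
    _ ≤ C0 * (B + (b - a) * Real.exp (-(d / B))) := hφle
    _ = Real.exp (-EE a b c Δ θ) * M * (B + (b - a) * Real.exp (-(d / B))) := by rw [hC0def]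

lemma PP_eq {θ : ℝ} (hθ : θ ∈ Ioo a b) :
    PP a b c J Δ θ = J + J * (GG a b c Δ θ * Real.exp (EE a b c Δ θ) / Δ θ) := if_pos hθ

lemma PP_left : PP a b c J Δ a = J := if_neg (by simp)

lemma PP_right : PP a b c J Δ b = J := if_neg (by simp)

lemma contDiffOn_aux {F : ℝ → ℝ} {F' : ℝ → ℝ}
    (hd : ∀ θ ∈ Ioo a b, HasDerivAt F (F' θ) θ) (hc : ContinuousOn F' (Ioo a b)) :
    ContDiffOn ℝ 1 F (Ioo a b) := by
  have h := (contDiffOn_succ_iff_deriv_of_isOpen (𝕜 := ℝ) (n := 0)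
    (f := F) (s := Ioo a b) isOpen_Ioo)
  rw [zero_add] at h
  refine h.2 ⟨fun θ hθ => (hd θ hθ).differentiableAt.differentiableWithinAt, by simp, ?_⟩
  rw [contDiffOn_zero]
  exact hc.congr fun θ hθ => (hd θ hθ).deriv

lemma contDiffOn_PP (hab : a < b) (hc : 0 < c) (hΔ : ContDiffOn ℝ 1 Δ (Icc a b))
    (hpos : ∀ θ ∈ Ioo a b, 0 < Δ θ)
    (hM : ∀ x ∈ Icc a b, |derivWithin Δ (Icc a b) x| ≤ M) :
    ContDiffOn ℝ 1 (PP a b c J Δ) (Ioo a b) := by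
  have hE : ContDiffOn ℝ 1 (EE a b c Δ) (Ioo a b) :=
    contDiffOn_aux (fun θ hθ => hasDerivAt_EE hab hc hΔ hpos hθ) (contOn_fD hc hΔ hpos)
  have hG : ContDiffOn ℝ 1 (GG a b c Δ) (Ioo a b) :=
    contDiffOn_aux (fun θ hθ => hasDerivAt_GG hab hc hΔ hpos hM hθ)
      ((((contOn_EE hab hc hΔ hpos).neg.rexp).mul (contOn_derivΔ hab hΔ)).neg)
  have hΔ' : ContDiffOn ℝ 1 Δ (Ioo a b) := hΔ.mono Ioo_subset_Icc_self
  have hform : ContDiffOn ℝ 1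
      (fun θ => J + J * (GG a b c Δ θ * Real.exp (EE a b c Δ θ) / Δ θ)) (Ioo a b) :=
    contDiffOn_const.add (contDiffOn_const.mul
      ((hG.mul hE.exp).div hΔ' fun θ hθ => (hpos θ hθ).ne'))
  exact hform.congr fun θ hθ => PP_eq hθ

lemma PP_dist (hab : a < b) (hc : 0 < c) (hΔ : ContDiffOn ℝ 1 Δ (Icc a b))
    (hpos : ∀ θ ∈ Ioo a b, 0 < Δ θ)
    (hM : ∀ x ∈ Icc a b, |derivWithin Δ (Icc a b) x| ≤ M) (hM0 : 0 ≤ M)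
    {θ : ℝ} (hθ : θ ∈ Ioo a b) :
    |PP a b c J Δ θ - J| ≤ |J| * M * (c * (1 + M) ^ 2 * Δ θ +
      (b - a) * Real.exp (-(1 / (c * (1 + M) ^ 2) / Δ θ)) / Δ θ) := by
  set d := Δ θ with hdd
  have hd0 : 0 < d := hpos θ hθ
  have hKd : d / (c * (1 + M) ^ 2 * d ^ 2) = 1 / (c * (1 + M) ^ 2) / d := by
    field_simp
  have h1 : |PP a b c J Δ θ - J| =
      |J| * (|GG a b c Δ θ| * Real.exp (EE a b c Δ θ) / d) := by
    rw [PP_eq hθ]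
    rw [show J + J * (GG a b c Δ θ * Real.exp (EE a b c Δ θ) / d) - J
      = J * (GG a b c Δ θ * Real.exp (EE a b c Δ θ) / d) from by ring]
    rw [abs_mul, abs_div, abs_mul, abs_of_pos (Real.exp_pos _), abs_of_pos hd0]
  rw [h1]
  have h2 := GG_bound hab hc hΔ hpos hM hM0 hθ
  have h3 : |GG a b c Δ θ| * Real.exp (EE a b c Δ θ) / d ≤
      M * (c * (1 + M) ^ 2 * d + (b - a) * Real.exp (-(1 / (c * (1 + M) ^ 2) / d)) / d) := by
    have h4 : |GG a b c Δ θ| * Real.exp (EE a b c Δ θ) / d ≤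
        (Real.exp (-EE a b c Δ θ) * M * (c * (1 + M) ^ 2 * d ^ 2 +
          (b - a) * Real.exp (-(d / (c * (1 + M) ^ 2 * d ^ 2))))) *
          Real.exp (EE a b c Δ θ) / d := by
      gcongr
    refine h4.trans (le_of_eq ?_)
    rw [hKd, Real.exp_neg (EE a b c Δ θ)]
    have hexp := Real.exp_ne_zero (EE a b c Δ θ)
    field_simp
  calc |J| * (|GG a b c Δ θ| * Real.exp (EE a b c Δ θ) / d)
      ≤ |J| * (M * (c * (1 + M) ^ 2 * d +
        (b - a) * Real.exp (-(1 / (c * (1 + M) ^ 2) / d)) / d)) :=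
        mul_le_mul_of_nonneg_left h3 (abs_nonneg J)
    _ = _ := by ring

lemma tendsto_psi (hc : 0 < c) (hM0 : 0 ≤ M) :
    Tendsto (fun d : ℝ => |J| * M * (c * (1 + M) ^ 2 * d +
      (b - a) * Real.exp (-(1 / (c * (1 + M) ^ 2) / d)) / d)) (𝓝[>] (0:ℝ)) (𝓝 0) := by
  set K := 1 / (c * (1 + M) ^ 2) with hK
  have hK0 : 0 < K := by positivity
  have h1 : Tendsto (fun d : ℝ => Real.exp (-(K / d)) / d) (𝓝[>] (0:ℝ)) (𝓝 0) := by
    have h2 : Tendsto (fun d : ℝ => K / d) (𝓝[>] (0:ℝ)) atTop := by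
      have h2' : Tendsto (fun d : ℝ => d⁻¹) (𝓝[>] (0:ℝ)) atTop := tendsto_inv_nhdsGT_zero
      have := h2'.const_mul_atTop hK0
      simpa [div_eq_mul_inv] using this
    have h3 : Tendsto (fun y : ℝ => y / K * Real.exp (-y)) atTop (𝓝 0) := by
      have h4 := tendsto_pow_mul_exp_neg_atTop_nhds_zero 1
      have h5 := h4.div_const K
      simp only [pow_one, zero_div] at h5
      exact h5.congr fun y => by ring
    have h6 := h3.comp h2
    apply Filter.Tendsto.congr' _ h6
    filter_upwards [self_mem_nhdsWithin] with d hd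
    have hd0 : (d : ℝ) ≠ 0 := ne_of_gt hd
    have hKne : K ≠ 0 := ne_of_gt hK0
    simp only [Function.comp]
    rw [show K / d / K = 1 / d from by field_simp]
    ring
  have hlin : Tendsto (fun d : ℝ => |J| * M * c * (1 + M) ^ 2 * d) (𝓝[>] (0:ℝ)) (𝓝 0) := by
    have hcont : Continuous fun d : ℝ => |J| * M * c * (1 + M) ^ 2 * d := by fun_prop
    have h := hcont.tendsto 0
    simp only [mul_zero] at h
    exact h.mono_left nhdsWithin_le_nhds
  have hsec : Tendsto (fun d : ℝ => |J| * M * (b - a) * (Real.exp (-(K / d)) / d))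
      (𝓝[>] (0:ℝ)) (𝓝 0) := by
    have h := h1.const_mul (|J| * M * (b - a))
    simpa using h
  have hsum := hlin.add hsec
  simp only [add_zero] at hsum
  apply hsum.congr
  intro d
  rw [hK]
  ring

lemma contWithinAt_endpoint (hab : a < b) (hc : 0 < c) (hΔ : ContDiffOn ℝ 1 Δ (Icc a b))
    (hpos : ∀ θ ∈ Ioo a b, 0 < Δ θ)
    (hM : ∀ x ∈ Icc a b, |derivWithin Δ (Icc a b) x| ≤ M) (hM0 : 0 ≤ M)
    {e : ℝ} (he : e ∈ Icc a b) (hPe : PP a b c J Δ e = J) (hΔe : Δ e = 0) :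
    ContinuousWithinAt (PP a b c J Δ) (Icc a b) e := by
  rw [ContinuousWithinAt, hPe, Metric.tendsto_nhdsWithin_nhds]
  intro ε hε
  have hev : ∀ᶠ d in 𝓝[>] (0:ℝ), |J| * M * (c * (1 + M) ^ 2 * d +
      (b - a) * Real.exp (-(1 / (c * (1 + M) ^ 2) / d)) / d) < ε :=
    (tendsto_psi (J := J) (b := b) (a := a) hc hM0).eventually_lt_const hε
  obtain ⟨δ₁, hδ₁, h₁⟩ := Metric.eventually_nhds_iff.1 (eventually_nhdsWithin_iff.1 hev)
  have hΔc : ContinuousWithinAt Δ (Icc a b) e := hΔ.continuousOn e he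
  have hΔc' := Metric.tendsto_nhdsWithin_nhds.1 hΔc δ₁ hδ₁
  obtain ⟨δ₂, hδ₂, h₂⟩ := hΔc'
  refine ⟨δ₂, hδ₂, fun {x} hx hdist => ?_⟩
  by_cases hxI : x ∈ Ioo a b
  · have hΔx : dist (Δ x) (Δ e) < δ₁ := h₂ hx hdist
    rw [hΔe, Real.dist_eq, sub_zero, abs_of_pos (hpos x hxI)] at hΔx
    have hb' := PP_dist (J := J) hab hc hΔ hpos hM hM0 hxI
    have hψx := h₁
      (by rw [Real.dist_eq, sub_zero, abs_of_pos (hpos x hxI)]; exact hΔx)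
      (mem_Ioi.2 (hpos x hxI))
    rw [Real.dist_eq]
    exact lt_of_le_of_lt hb' hψx
  · rw [show PP a b c J Δ x = J from if_neg hxI]
    simpa using hε

lemma PP_ode (hab : a < b) (hc : 0 < c) (hΔ : ContDiffOn ℝ 1 Δ (Icc a b))
    (hpos : ∀ θ ∈ Ioo a b, 0 < Δ θ)
    (hM : ∀ x ∈ Icc a b, |derivWithin Δ (Icc a b) x| ≤ M)
    {θ : ℝ} (hθ : θ ∈ Ioo a b) :
    -J = -PP a b c J Δ θ + c * Δ θ * deriv (fun s => Δ s * PP a b c J Δ s) θ := by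
  have hd0 : 0 < Δ θ := hpos θ hθ
  have hE := hasDerivAt_EE hab hc hΔ hpos hθ
  have hG := hasDerivAt_GG hab hc hΔ hpos hM hθ
  have hΔd := hasDerivAt_Δ hΔ hθ
  have hQ : HasDerivAt (fun s => J * Δ s + J * (GG a b c Δ s * Real.exp (EE a b c Δ s)))
      (J * deriv Δ θ + J * (-(Real.exp (-EE a b c Δ θ) * deriv Δ θ) * Real.exp (EE a b c Δ θ)
        + GG a b c Δ θ * (Real.exp (EE a b c Δ θ) * fD c Δ θ))) θ :=
    (hΔd.const_mul J).add ((hG.mul hE.exp).const_mul J)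
  have heq : (fun s => Δ s * PP a b c J Δ s) =ᶠ[𝓝 θ]
      (fun s => J * Δ s + J * (GG a b c Δ s * Real.exp (EE a b c Δ s))) := by
    filter_upwards [isOpen_Ioo.mem_nhds hθ] with s hs
    rw [show PP a b c J Δ s = J + J * (GG a b c Δ s * Real.exp (EE a b c Δ s) / Δ s)
      from if_pos hs]
    field_simp [(hpos s hs).ne']
  have hQ' := hQ.congr_of_eventuallyEq heq
  rw [hQ'.deriv]
  rw [show PP a b c J Δ θ = J + J * (GG a b c Δ θ * Real.exp (EE a b c Δ θ) / Δ θ)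
    from if_pos hθ]
  rw [fD, Real.exp_neg]
  have hexp := Real.exp_ne_zero (EE a b c Δ θ)
  field_simp
  ring

end

end Stmt7Aux

/-- Existence of a solution of the singular steady-state equation
`−J = −P(θ) + (σ²/2) Δ(θ) (Δ·P)'(θ)` on `(a,b)`, continuous up to the endpoints with
boundary values `P(a) = P(b) = J`, where `Δ` is continuously differentiable on `[a,b]`,
vanishes at the endpoints and is positive inside. -/
theorem stmt_7 (a b σ J : ℝ) (Δ : ℝ → ℝ)
    (hab : a < b)
    (hΔ : ContDiffOn ℝ 1 Δ (Icc a b))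
    (hΔa : Δ a = 0) (hΔb : Δ b = 0)
    (hΔpos : ∀ θ ∈ Ioo a b, 0 < Δ θ)
    (hσ : 0 < σ) :
    ∃ P : ℝ → ℝ, ContinuousOn P (Icc a b) ∧ ContDiffOn ℝ 1 P (Ioo a b) ∧
      P a = J ∧ P b = J ∧
      ∀ θ ∈ Ioo a b,
        -J = -P θ + σ ^ 2 / 2 * Δ θ * deriv (fun s => Δ s * P s) θ := by
  have hc : 0 < σ ^ 2 / 2 := by positivity
  obtain ⟨M0, hM0b⟩ := isCompact_Icc.exists_bound_of_continuousOn
    (hΔ.continuousOn_derivWithin (uniqueDiffOn_Icc hab) le_rfl)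
  have hM : ∀ x ∈ Icc a b, |derivWithin Δ (Icc a b) x| ≤ max M0 0 := fun x hx =>
    le_trans (by simpa [Real.norm_eq_abs] using hM0b x hx) (le_max_left _ _)
  have hM0 : (0:ℝ) ≤ max M0 0 := le_max_right _ _
  refine ⟨Stmt7Aux.PP a b (σ ^ 2 / 2) J Δ, ?_, Stmt7Aux.contDiffOn_PP hab hc hΔ hΔpos hM,
    Stmt7Aux.PP_left, Stmt7Aux.PP_right, fun θ hθ => ?_⟩
  · intro θ hθ
    rcases eq_or_lt_of_le hθ.1 with h | h
    · rw [← h]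
      exact Stmt7Aux.contWithinAt_endpoint hab hc hΔ hΔpos hM hM0
        (left_mem_Icc.2 hab.le) Stmt7Aux.PP_left hΔa
    rcases eq_or_lt_of_le hθ.2 with h' | h'
    · rw [h']
      exact Stmt7Aux.contWithinAt_endpoint hab hc hΔ hΔpos hM hM0
        (right_mem_Icc.2 hab.le) Stmt7Aux.PP_right hΔb
    · exact ((Stmt7Aux.contDiffOn_PP hab hc hΔ hΔpos hM).continuousOn.continuousAt
        (isOpen_Ioo.mem_nhds ⟨h, h'⟩)).continuousWithinAt
  · exact Stmt7Aux.PP_ode hab hc hΔ hΔpos hM hθ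
end

section
/- Let Δ : ℝ → ℝ be three times continuously differentiable and 1-periodic, and let σ ∈ ℝ. Define P₁ := (1/2)ΔΔ', J₂ := (1/4)∫₀¹ (Δ(θ)Δ'(θ))² dθ, P₂ := (1/2)Δ²(Δ')² + (1/4)Δ³Δ'' + J₂, and set P := 1 + σ²P₁ + σ⁴P₂ and J := 1 + σ⁴J₂. Then for every θ, −J + P(θ) − (σ²/2) Δ(θ) (Δ·P)'(θ) = −(σ⁶/2) Δ(θ) (Δ·P₂)'(θ); that is, the second-order expansion satisfies the steady-state equation −J = −P + (σ²/2)Δ(ΔP)' up to an error of order σ⁶. -/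
open Real Filter Set Topology intervalIntegral

/-- For `Δ` three times continuously differentiable and 1-periodic,
with `P₁ = (1/2)ΔΔ'`, `J₂ = (1/4)∫₀¹(ΔΔ')²`, `P₂ = (1/2)Δ²(Δ')² + (1/4)Δ³Δ'' + J₂`,
`P = 1 + σ²P₁ + σ⁴P₂` and `J = 1 + σ⁴J₂`, the residual of the steady-state equation
equals `−(σ⁶/2) Δ (Δ·P₂)'`; i.e. the second-order expansion satisfies
`−J = −P + (σ²/2)Δ(ΔP)'` up to an error of order `σ⁶`. -/
theorem stmt_9 (σ : ℝ) (Δ : ℝ → ℝ) (hΔ : ContDiff ℝ 3 Δ)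
    (hper : Function.Periodic Δ 1)
    (P₁ P₂ P : ℝ → ℝ) (J₂ J : ℝ)
    (hP₁ : ∀ θ, P₁ θ = 1 / 2 * Δ θ * deriv Δ θ)
    (hJ₂ : J₂ = 1 / 4 * ∫ θ in (0:ℝ)..1, (Δ θ * deriv Δ θ) ^ 2)
    (hP₂ : ∀ θ, P₂ θ = 1 / 2 * (Δ θ) ^ 2 * (deriv Δ θ) ^ 2
        + 1 / 4 * (Δ θ) ^ 3 * deriv (deriv Δ) θ + J₂)
    (hP : ∀ θ, P θ = 1 + σ ^ 2 * P₁ θ + σ ^ 4 * P₂ θ)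
    (hJ : J = 1 + σ ^ 4 * J₂) :
    ∀ θ : ℝ,
      -J + P θ - σ ^ 2 / 2 * Δ θ * deriv (fun s => Δ s * P s) θ
        = -(σ ^ 6 / 2) * Δ θ * deriv (fun s => Δ s * P₂ s) θ := by
  have hΔ1 : ContDiff ℝ 2 (deriv Δ) := (contDiff_succ_iff_deriv.mp (show ContDiff ℝ (2+1) Δ by exact_mod_cast hΔ)).2.2
  have hΔ2 : ContDiff ℝ 1 (deriv (deriv Δ)) := (contDiff_succ_iff_deriv.mp (show ContDiff ℝ (1+1) (deriv Δ) by exact_mod_cast hΔ1)).2.2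
  intro θ
  have h1 : HasDerivAt Δ (deriv Δ θ) θ :=
    ((hΔ.differentiable (by norm_num)) θ).hasDerivAt
  have h2 : HasDerivAt (deriv Δ) (deriv (deriv Δ) θ) θ :=
    ((hΔ1.differentiable (by norm_num)) θ).hasDerivAt
  have h3 : HasDerivAt (deriv (deriv Δ)) (deriv (deriv (deriv Δ)) θ) θ :=
    ((hΔ2.differentiable (by norm_num)) θ).hasDerivAt
  have e₂ : (fun s => Δ s * P₂ s)
      = fun s => Δ s * (1/2*(Δ s)^2*(deriv Δ s)^2 + 1/4*(Δ s)^3*deriv (deriv Δ) s + J₂) :=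
    funext fun s => by rw [hP₂]
  have e : (fun s => Δ s * P s)
      = fun s => Δ s + σ^2 * (1/2*(Δ s)^2*deriv Δ s)
          + σ^4 * (Δ s * (1/2*(Δ s)^2*(deriv Δ s)^2 + 1/4*(Δ s)^3*deriv (deriv Δ) s + J₂)) :=
    funext fun s => by rw [hP, hP₁, hP₂]; ring
  have hA := h1.mul (((((h1.pow 2).const_mul (1/2:ℝ)).mul (h2.pow 2)).add
      (((h1.pow 3).const_mul (1/4:ℝ)).mul h3)).add_const J₂)
  have hB := (h1.add ((((h1.pow 2).const_mul (1/2:ℝ)).mul h2).const_mul (σ^2))).add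
      (hA.const_mul (σ^4))
  have hA' : HasDerivAt (fun s => Δ s * (1/2*(Δ s)^2*(deriv Δ s)^2 + 1/4*(Δ s)^3*deriv (deriv Δ) s + J₂)) _ θ := hA
  have hB' : HasDerivAt (fun s => Δ s + σ^2 * (1/2*(Δ s)^2*deriv Δ s)
          + σ^4 * (Δ s * (1/2*(Δ s)^2*(deriv Δ s)^2 + 1/4*(Δ s)^3*deriv (deriv Δ) s + J₂))) _ θ := hB
  rw [e, e₂, hB'.deriv, hA'.deriv, hJ, hP θ, hP₁ θ, hP₂ θ]
  simp only [Pi.pow_apply, Pi.mul_apply, Pi.add_apply, Nat.reduceSub, Nat.cast_ofNat]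
  ring
end

section
/- Let a, b, c ∈ ℝ with D² := a + 4bπ² + 16cπ⁴ > 0 and a ≠ 144cπ⁴, and set ν := 4π²/D², D := √(a + 4bπ² + 16cπ⁴), Δ₀(θ) := √2 sin(2πθ)/D. Then the function Δ₁(θ) := √2 π sin(2πθ) sin(4πθ) / ((a − 144cπ⁴) D) is 1-periodic and satisfies the inhomogeneous fourth-order equation a ν Δ₁(θ) + (1 − bν) Δ₁''(θ) + c ν Δ₁⁗(θ) = (Δ₀'(θ))³ + 3 Δ₀(θ) Δ₀'(θ) Δ₀''(θ) for all θ ∈ ℝ. -/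
open Real Filter Set Topology intervalIntegral

lemma hd_cos (A p x : ℝ) : HasDerivAt (fun y => A * Real.cos (p * y)) (-(A * p) * Real.sin (p * x)) x := by
  have h := ((Real.hasDerivAt_cos (p * x)).comp x ((hasDerivAt_id x).const_mul p)).const_mul A
  rw [show -(A * p) * Real.sin (p * x) = A * (-Real.sin (p * x) * (p * 1)) by ring]; exact h

lemma hd_sin (A p x : ℝ) : HasDerivAt (fun y => A * Real.sin (p * y)) ((A * p) * Real.cos (p * x)) x := by
  have h := ((Real.hasDerivAt_sin (p * x)).comp x ((hasDerivAt_id x).const_mul p)).const_mul A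
  rw [show (A * p) * Real.cos (p * x) = A * (Real.cos (p * x) * (p * 1)) by ring]; exact h

lemma d2cos (A B p q : ℝ) :
    deriv (deriv (fun y => A * Real.cos (p * y) + B * Real.cos (q * y))) =
      fun y => (-(A * p ^ 2)) * Real.cos (p * y) + (-(B * q ^ 2)) * Real.cos (q * y) := by
  have h1 : deriv (fun y => A * Real.cos (p * y) + B * Real.cos (q * y)) =
      fun y => (-(A * p)) * Real.sin (p * y) + (-(B * q)) * Real.sin (q * y) :=
    funext fun x => ((hd_cos A p x).add (hd_cos B q x)).deriv
  rw [h1]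
  funext x
  have h2 := ((hd_sin (-(A * p)) p x).add (hd_sin (-(B * q)) q x)).deriv
  exact h2.trans (by ring)

lemma d1sin (E p : ℝ) :
    deriv (fun y => E * Real.sin (p * y)) = fun y => (E * p) * Real.cos (p * y) :=
  funext fun x => (hd_sin E p x).deriv

lemma d2sin (E p : ℝ) :
    deriv (deriv (fun y => E * Real.sin (p * y))) = fun y => (-(E * p ^ 2)) * Real.sin (p * y) := by
  rw [d1sin]
  funext x
  rw [(hd_cos (E * p) p x).deriv]; ring

lemma iter2eq (f : ℝ → ℝ) : iteratedDeriv 2 f = deriv (deriv f) := by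
  rw [show (2:ℕ) = 1 + 1 from rfl, iteratedDeriv_succ, iteratedDeriv_one]

lemma iter4eq (f : ℝ → ℝ) : iteratedDeriv 4 f = deriv (deriv (deriv (deriv f))) := by
  rw [show (4:ℕ) = 3 + 1 from rfl, iteratedDeriv_succ, show (3:ℕ) = 2 + 1 from rfl,
    iteratedDeriv_succ, show (2:ℕ) = 1 + 1 from rfl, iteratedDeriv_succ, iteratedDeriv_one]

/-- With `D² = a + 4bπ² + 16cπ⁴ > 0`, `a ≠ 144cπ⁴`, `ν = 4π²/D²`,
`D = √(a + 4bπ² + 16cπ⁴)` and `Δ₀(θ) = √2 sin(2πθ)/D`, the function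
`Δ₁(θ) = √2 π sin(2πθ) sin(4πθ)/((a − 144cπ⁴)D)` is 1-periodic and satisfies
`aνΔ₁ + (1 − bν)Δ₁'' + cνΔ₁⁗ = (Δ₀')³ + 3Δ₀Δ₀'Δ₀''`. -/
theorem stmt_14 (a b c : ℝ)
    (hD : 0 < a + 4 * b * π ^ 2 + 16 * c * π ^ 4)
    (hne : a ≠ 144 * c * π ^ 4)
    (ν D : ℝ)
    (hν : ν = 4 * π ^ 2 / (a + 4 * b * π ^ 2 + 16 * c * π ^ 4))
    (hDdef : D = Real.sqrt (a + 4 * b * π ^ 2 + 16 * c * π ^ 4))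
    (Δ₀ Δ₁ : ℝ → ℝ)
    (hΔ₀ : ∀ θ, Δ₀ θ = Real.sqrt 2 * Real.sin (2 * π * θ) / D)
    (hΔ₁ : ∀ θ, Δ₁ θ = Real.sqrt 2 * π * Real.sin (2 * π * θ) * Real.sin (4 * π * θ)
      / ((a - 144 * c * π ^ 4) * D)) :
    Function.Periodic Δ₁ 1 ∧
    ∀ θ : ℝ, a * ν * Δ₁ θ + (1 - b * ν) * iteratedDeriv 2 Δ₁ θ
        + c * ν * iteratedDeriv 4 Δ₁ θ
      = (deriv Δ₀ θ) ^ 3 + 3 * Δ₀ θ * deriv Δ₀ θ * iteratedDeriv 2 Δ₀ θ := by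
  have hD2 : D ^ 2 = a + 4 * b * π ^ 2 + 16 * c * π ^ 4 := by
    rw [hDdef]; exact Real.sq_sqrt hD.le
  have hDpos : 0 < D := hDdef ▸ Real.sqrt_pos.mpr hD
  have hDne : D ≠ 0 := hDpos.ne'
  have hEne : a - 144 * c * π ^ 4 ≠ 0 := sub_ne_zero.mpr hne
  have ha : a = D ^ 2 - 4 * b * π ^ 2 - 16 * c * π ^ 4 := by linarith
  have hE2 : D ^ 2 - 4 * b * π ^ 2 - 16 * c * π ^ 4 - 144 * c * π ^ 4 ≠ 0 := by
    rw [← ha]; exact hEne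
  set A : ℝ := Real.sqrt 2 * π / (2 * ((a - 144 * c * π ^ 4) * D)) with hA
  -- product-to-sum
  have hps : ∀ θ : ℝ, Real.cos (2 * π * θ) - Real.cos (6 * π * θ)
      = 2 * Real.sin (2 * π * θ) * Real.sin (4 * π * θ) := by
    intro θ
    have h := Real.cos_sub_cos (2 * π * θ) (6 * π * θ)
    rw [show (2 * π * θ + 6 * π * θ) / 2 = 4 * π * θ by ring,
      show (2 * π * θ - 6 * π * θ) / 2 = -(2 * π * θ) by ring, Real.sin_neg] at h
    linarith [h]
  have hg : Δ₁ = fun θ => A * Real.cos (2 * π * θ) + (-A) * Real.cos (6 * π * θ) := by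
    funext θ
    rw [hΔ₁]
    have h := hps θ
    have h' : A * Real.cos (2 * π * θ) + (-A) * Real.cos (6 * π * θ)
        = A * (2 * Real.sin (2 * π * θ) * Real.sin (4 * π * θ)) := by rw [← h]; ring
    rw [h', hA]
    field_simp
  constructor
  · intro θ
    rw [hΔ₁, hΔ₁]
    rw [show 2 * π * (θ + 1) = 2 * π * θ + 2 * π by ring, Real.sin_add_two_pi,
      show 4 * π * (θ + 1) = 4 * π * θ + 2 * π + 2 * π by ring, Real.sin_add_two_pi,
      Real.sin_add_two_pi]
  · intro θ
    have hf0 : Δ₀ = fun θ => (Real.sqrt 2 / D) * Real.sin (2 * π * θ) := by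
      funext θ; rw [hΔ₀]; ring
    have i2g : iteratedDeriv 2 Δ₁ =
        fun y => (-(A * (2 * π) ^ 2)) * Real.cos (2 * π * y)
          + (-((-A) * (6 * π) ^ 2)) * Real.cos (6 * π * y) := by
      rw [iter2eq, hg, d2cos]
    have i4g : iteratedDeriv 4 Δ₁ =
        fun y => (-(-(A * (2 * π) ^ 2) * (2 * π) ^ 2)) * Real.cos (2 * π * y)
          + (-(-((-A) * (6 * π) ^ 2) * (6 * π) ^ 2)) * Real.cos (6 * π * y) := by
      rw [iter4eq, hg]
      have h := d2cos A (-A) (2 * π) (6 * π)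
      rw [h, d2cos]
    have d0 : deriv Δ₀ = fun y => ((Real.sqrt 2 / D) * (2 * π)) * Real.cos (2 * π * y) := by
      rw [hf0, d1sin]
    have i20 : iteratedDeriv 2 Δ₀ =
        fun y => (-((Real.sqrt 2 / D) * (2 * π) ^ 2)) * Real.sin (2 * π * y) := by
      rw [iter2eq, hf0, d2sin]
    have hcos6 : Real.cos (6 * π * θ) = 4 * Real.cos (2 * π * θ) ^ 3 - 3 * Real.cos (2 * π * θ) := by
      have h := Real.cos_three_mul (2 * π * θ)
      rw [show 3 * (2 * π * θ) = 6 * π * θ by ring] at h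
      exact h
    have hsin : Real.sin (2 * π * θ) ^ 2 = 1 - Real.cos (2 * π * θ) ^ 2 := Real.sin_sq _
    have hs2 : Real.sqrt 2 ^ 2 = 2 := Real.sq_sqrt (by norm_num)
    have hR : (deriv Δ₀ θ) ^ 3 + 3 * Δ₀ θ * deriv Δ₀ θ * iteratedDeriv 2 Δ₀ θ
        = 16 * Real.sqrt 2 * π ^ 3 * Real.cos (6 * π * θ) / D ^ 3 := by
      rw [d0, i20, hf0, hcos6]
      simp only []
      linear_combination (-24 * π ^ 3 * Real.sqrt 2 ^ 3 * Real.cos (2 * π * θ) / D ^ 3) * hsin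
        + ((32 * Real.cos (2 * π * θ) ^ 3 - 24 * Real.cos (2 * π * θ)) * π ^ 3 * Real.sqrt 2 / D ^ 3) * hs2
    rw [hR, i2g, i4g, hg]
    simp only []
    rw [hν, ← hD2, hA, ha]
    field_simp
    linear_combination (32 * cos (π * θ * 6)) * mul_inv_cancel₀ (show D ^ 2 - b * π ^ 2 * 4 - π ^ 4 * c * 160 ≠ 0 by intro h; apply hE2; linarith)
end

section
/- Let b ≥ 0 and σ > 0, and define λ : [−1, 1] → ℝ by λ(K) := −1/(b + 4π²) + (σ⁴/4)·(4K⁴ + 10K² + 1)/(4π²(b + 4π²)³). Then the derivative of λ has exactly one real root, at K = 0, and λ attains its unique global minimum on [−1, 1] at K = 0; the minimum value is λ(0) = −1/(b + 4π²) + σ⁴/(16π²(b + 4π²)³). In particular, among the family of candidate phase resetting curves indexed by K, the Type II curve (K = 0) minimizes the Lyapunov exponent. -/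
open Real Filter Set Topology intervalIntegral

/-- For `b ≥ 0`, `σ > 0` and
`λ(K) = −1/(b + 4π²) + (σ⁴/4)(4K⁴ + 10K² + 1)/(4π²(b + 4π²)³)`, the derivative of
`λ` has exactly one real root, at `K = 0`; `λ` attains its unique global minimum on
`[−1,1]` at `K = 0`; and the minimum value is
`λ(0) = −1/(b + 4π²) + σ⁴/(16π²(b + 4π²)³)`. -/
theorem stmt_19 (b σ : ℝ) (hb : 0 ≤ b) (hσ : 0 < σ)
    (lam : ℝ → ℝ)
    (hlam : ∀ K : ℝ, lam K = -1 / (b + 4 * π ^ 2)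
      + σ ^ 4 / 4 * (4 * K ^ 4 + 10 * K ^ 2 + 1) / (4 * π ^ 2 * (b + 4 * π ^ 2) ^ 3)) :
    (∀ K : ℝ, deriv lam K = 0 ↔ K = 0) ∧
    (∀ K ∈ Set.Icc (-1 : ℝ) 1, K ≠ 0 → lam 0 < lam K) ∧
    lam 0 = -1 / (b + 4 * π ^ 2) + σ ^ 4 / (16 * π ^ 2 * (b + 4 * π ^ 2) ^ 3) := by
  have hπ : 0 < π := Real.pi_pos
  have hB : 0 < b + 4 * π ^ 2 := by positivity
  have hD : 0 < 4 * π ^ 2 * (b + 4 * π ^ 2) ^ 3 := by positivity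
  have hσ4 : 0 < σ ^ 4 := by positivity
  set A := -1 / (b + 4 * π ^ 2) with hA
  set c := σ ^ 4 / 4 / (4 * π ^ 2 * (b + 4 * π ^ 2) ^ 3) with hc
  have hcpos : 0 < c := by positivity
  have hlam' : lam = fun K => A + c * (4 * K ^ 4 + 10 * K ^ 2 + 1) := by
    funext K; rw [hlam K]; ring
  have hderiv : ∀ K : ℝ, deriv lam K = c * (16 * K ^ 3 + 20 * K) := by
    intro K
    rw [hlam']
    have h : HasDerivAt (fun K : ℝ => A + c * (4 * K ^ 4 + 10 * K ^ 2 + 1))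
        (c * (16 * K ^ 3 + 20 * K)) K := by
      have h1 : HasDerivAt (fun K : ℝ => K) 1 K := hasDerivAt_id K
      have h4 := (h1.pow 4)
      have h2 := (h1.pow 2)
      have := ((((h4.const_mul (4:ℝ)).add (h2.const_mul (10:ℝ))).add_const 1).const_mul c).const_add A
      refine this.congr_deriv ?_
      push_cast; ring
    exact h.deriv
  refine ⟨?_, ?_, ?_⟩
  · intro K
    rw [hderiv K]
    constructor
    · intro h
      rcases mul_eq_zero.mp h with h | h
      · exact absurd h (ne_of_gt hcpos)
      · nlinarith [sq_nonneg K, sq_nonneg (K^2)]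
    · rintro rfl; ring
  · intro K _ hK
    rw [hlam K, hlam 0]
    have hK2 : 0 < K ^ 2 := by positivity
    have hx : (4*(0:ℝ)^4+10*0^2+1) < 4*K^4+10*K^2+1 := by nlinarith [sq_nonneg (K^2)]
    gcongr
  · rw [hlam 0]; field_simp; ring
end
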